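/- arXiv:2401.12059 — 4 statements merged into one kernel-verified Lean document; each statement's English description precedes it below -/
import Mathlib

section
/- Let (X,d) be a metric space and L a connected, totally bounded subset of X. If the upper box dimension of L is finite, then limsup_{n→∞} e_n(L)^{1/n} < 1. -/
open Filter Metric Set Topology

/-- The `n`-th dyadic entropy number of a set `L` in a metric space: the infimum of
radii `ε > 0` such that `L` can be covered by `2^(n-1)` balls of radius `ε`. -/
noncomputable def entropyNum {X : Type*} [MetricSpace X] (n : ℕ) (L : Set X) : ℝ :=
  sInf {ε : ℝ | 0 < ε ∧ ∃ s : Finset X, s.card ≤ 2 ^ (n - 1) ∧ L ⊆ ⋃ x ∈ s, Metric.ball x ε}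

/-- The covering number `N(L, ε)`: minimal number of `ε`-balls needed to cover `L`. -/
noncomputable def coveringNum {X : Type*} [MetricSpace X] (L : Set X) (ε : ℝ) : ℕ :=
  sInf {n : ℕ | ∃ s : Finset X, s.card = n ∧ L ⊆ ⋃ x ∈ s, Metric.ball x ε}

/-- The upper box (counting) dimension of `L`. -/
noncomputable def upperBoxDim {X : Type*} [MetricSpace X] (L : Set X) : EReal :=
  Filter.limsup (fun ε : ℝ => ((Real.log (coveringNum L ε) / (-Real.log ε) : ℝ) : EReal)) (𝓝[>] 0)

/-- The lower box (counting) dimension of `L`. -/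
noncomputable def lowerBoxDim {X : Type*} [MetricSpace X] (L : Set X) : EReal :=
  Filter.liminf (fun ε : ℝ => ((Real.log (coveringNum L ε) / (-Real.log ε) : ℝ) : EReal)) (𝓝[>] 0)

/-- For a totally bounded set, a minimal cover exists, i.e. there is a finset of
cardinality `coveringNum L ε` whose `ε`-balls cover `L`. -/
lemma coveringNum_spec {X : Type*} [MetricSpace X] {L : Set X} (htb : TotallyBounded L)
    {ε : ℝ} (hε : 0 < ε) :
    ∃ s : Finset X, s.card = coveringNum L ε ∧ L ⊆ ⋃ x ∈ s, Metric.ball x ε := by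
  have hne : {n : ℕ | ∃ s : Finset X, s.card = n ∧ L ⊆ ⋃ x ∈ s, Metric.ball x ε}.Nonempty := by
    obtain ⟨t, htf, hts⟩ := Metric.totallyBounded_iff.1 htb ε hε
    refine ⟨htf.toFinset.card, htf.toFinset, rfl, ?_⟩
    simpa [htf.mem_toFinset] using hts
  have := Nat.sInf_mem hne
  obtain ⟨s, hs, hcov⟩ := this
  exact ⟨s, hs, hcov⟩

lemma one_le_coveringNum {X : Type*} [MetricSpace X] {L : Set X} (htb : TotallyBounded L)
    (hL : L.Nonempty) {ε : ℝ} (hε : 0 < ε) : 1 ≤ coveringNum L ε := by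
  by_contra h
  push_neg at h
  interval_cases h' : coveringNum L ε
  obtain ⟨s, hs, hcov⟩ := coveringNum_spec htb hε
  rw [h', Finset.card_eq_zero] at hs
  obtain ⟨x, hx⟩ := hL
  simpa [hs] using hcov hx

lemma entropyNum_nonneg {X : Type*} [MetricSpace X] (n : ℕ) (L : Set X) :
    0 ≤ entropyNum n L :=
  Real.sInf_nonneg fun _ hx => hx.1.le

/-- If a connected, totally bounded set has finite upper box dimension, then
`limsup eₙ(L)^(1/n) < 1`. -/
theorem stmt1 {X : Type*} [MetricSpace X] (L : Set X) (hconn : IsConnected L)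
    (htb : TotallyBounded L) (hdim : upperBoxDim L < ⊤) :
    Filter.limsup (fun n : ℕ => entropyNum n L ^ ((1 : ℝ) / n)) atTop < 1 := by
  obtain ⟨c, hc1, -⟩ := EReal.exists_between_coe_real hdim
  set C : ℝ := max c 1 with hCdef
  have hC1 : (1 : ℝ) ≤ C := le_max_right _ _
  have hC0 : (0 : ℝ) < C := lt_of_lt_of_le one_pos hC1
  have hlt : upperBoxDim L < (C : EReal) :=
    hc1.trans_le (by exact_mod_cast le_max_left c 1)
  have hev : ∀ᶠ ε in 𝓝[>] (0 : ℝ),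
      ((Real.log (coveringNum L ε) / (-Real.log ε) : ℝ) : EReal) < (C : EReal) :=
    Filter.eventually_lt_of_limsup_lt hlt
  have hsmall : ∀ᶠ ε in 𝓝[>] (0 : ℝ), ε ∈ Ioo (0 : ℝ) (1/2) :=
    Filter.eventually_of_mem (Ioo_mem_nhdsGT_of_mem ⟨le_refl _, by norm_num⟩) (fun x hx => hx)
  -- Key: eventually N(L, ε) ≤ ε^(-C)
  have key : ∀ᶠ ε in 𝓝[>] (0 : ℝ), (coveringNum L ε : ℝ) ≤ ε ^ (-C) := by
    filter_upwards [hev, hsmall] with ε h1 h2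
    have hε0 : (0 : ℝ) < ε := h2.1
    have hε1 : ε < 1 := h2.2.trans (by norm_num)
    have hlogneg : Real.log ε < 0 := Real.log_neg hε0 hε1
    have hlogpos : 0 < -Real.log ε := by linarith
    have h1' : Real.log (coveringNum L ε) / (-Real.log ε) < C := by
      exact_mod_cast h1
    have hN1 : 1 ≤ coveringNum L ε := one_le_coveringNum htb hconn.nonempty hε0
    have hNpos : (0 : ℝ) < (coveringNum L ε : ℝ) := by exact_mod_cast hN1
    have hlogN : Real.log (coveringNum L ε) < C * (-Real.log ε) := by
      rw [div_lt_iff₀ hlogpos] at h1'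
      linarith [h1']
    calc (coveringNum L ε : ℝ) = Real.exp (Real.log (coveringNum L ε)) :=
          (Real.exp_log hNpos).symm
      _ ≤ Real.exp (C * (-Real.log ε)) := (Real.exp_le_exp.2 hlogN.le)
      _ = ε ^ (-C) := by
          rw [Real.rpow_def_of_pos hε0]; ring_nf
  -- Extract a δ
  obtain ⟨δ, hδ0, hδ⟩ := mem_nhdsGT_iff_exists_Ioo_subset.1 key
  set r : ℝ := (2 : ℝ) ^ (-(1 : ℝ)/C) with hrdef
  have hr0 : 0 < r := Real.rpow_pos_of_pos (by norm_num) _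
  have hr1 : r < 1 := Real.rpow_lt_one_of_one_lt_of_neg (by norm_num)
    (by rw [neg_div]; exact neg_neg_iff_pos.2 (by positivity))
  have htend : Filter.Tendsto (fun n : ℕ => r ^ (n - 1)) atTop (𝓝 0) :=
    (tendsto_pow_atTop_nhds_zero_of_lt_one hr0.le hr1).comp
      (tendsto_sub_atTop_nat 1)
  have hevn : ∀ᶠ n : ℕ in atTop, r ^ (n - 1) < δ :=
    htend.eventually_lt_const hδ0
  -- eventually the entropy number is at most r^(n-1)
  have hE : ∀ᶠ n : ℕ in atTop, entropyNum n L ^ ((1:ℝ)/n) ≤ r ^ ((1:ℝ)/2) := by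
    filter_upwards [hevn, eventually_ge_atTop 2] with n hn hn2
    have hεn0 : 0 < r ^ (n - 1) := pow_pos hr0 _
    have hmem : r ^ (n - 1) ∈ Ioo (0 : ℝ) δ := ⟨hεn0, hn⟩
    have hNle : (coveringNum L (r ^ (n - 1)) : ℝ) ≤ (r ^ (n - 1)) ^ (-C) := hδ hmem
    have hcomp : (r ^ (n - 1) : ℝ) ^ (-C) = (2 : ℝ) ^ (n - 1) := by
      rw [hrdef, ← Real.rpow_natCast ((2:ℝ) ^ (-(1:ℝ)/C)) (n - 1),
        ← Real.rpow_mul (by norm_num : (0:ℝ) ≤ 2),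
        ← Real.rpow_mul (by norm_num : (0:ℝ) ≤ 2),
        ← Real.rpow_natCast (2:ℝ) (n - 1)]
      congr 1
      field_simp
    have hN2 : coveringNum L (r ^ (n - 1)) ≤ 2 ^ (n - 1) := by
      have : (coveringNum L (r ^ (n - 1)) : ℝ) ≤ ((2 ^ (n - 1) : ℕ) : ℝ) := by
        rw [hcomp] at hNle
        exact_mod_cast hNle
      exact_mod_cast this
    obtain ⟨s, hs, hcov⟩ := coveringNum_spec htb hεn0
    have hmem' : r ^ (n - 1) ∈ {ε : ℝ | 0 < ε ∧
        ∃ s : Finset X, s.card ≤ 2 ^ (n - 1) ∧ L ⊆ ⋃ x ∈ s, Metric.ball x ε} :=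
      ⟨hεn0, s, hs ▸ hN2, hcov⟩
    have hEle : entropyNum n L ≤ r ^ (n - 1) :=
      csInf_le ⟨0, fun x hx => hx.1.le⟩ hmem'
    calc entropyNum n L ^ ((1:ℝ)/n) ≤ (r ^ (n - 1)) ^ ((1:ℝ)/n) :=
          Real.rpow_le_rpow (entropyNum_nonneg n L) hEle (by positivity)
      _ = r ^ (((n : ℝ) - 1) / n) := by
          rw [← Real.rpow_natCast r (n - 1), ← Real.rpow_mul hr0.le]
          congr 1
          rw [Nat.cast_sub (by omega : 1 ≤ n)]
          push_cast
          ring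
      _ ≤ r ^ ((1:ℝ)/2) := by
          apply Real.rpow_le_rpow_of_exponent_ge hr0 hr1.le
          rw [div_le_div_iff₀ (by norm_num) (by positivity : (0:ℝ) < (n:ℝ))]
          have : (2 : ℝ) ≤ n := by exact_mod_cast hn2
          linarith
  have hρ1 : r ^ ((1:ℝ)/2) < 1 :=
    Real.rpow_lt_one hr0.le hr1 (by norm_num)
  have hcb : IsCoboundedUnder (· ≤ ·) (atTop : Filter ℕ)
      (fun n : ℕ => entropyNum n L ^ ((1:ℝ)/n)) :=
    Filter.isCoboundedUnder_le_of_le atTop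
      (fun n => Real.rpow_nonneg (entropyNum_nonneg n L) _)
  exact lt_of_le_of_lt (Filter.limsup_le_of_le hcb hE) hρ1
end

section
/- For 0 < ε < 1, the set K = {(x_n) ∈ c_0 : |x_n| ≤ ε^n for all n} satisfies: there exist positive constants C_1, C_2 such that C_1·s^{√(n-1)} ≤ e_n(K) ≤ C_2·S^{√(n-1)} for all n, where s = min{ε,1/2} and S = max{ε,1/2}. In particular, the sequence (e_n(K))_n belongs to ℓ_1. -/
open Filter Metric Set Topology

section Aux
open Filter Metric Set Topology ZeroAtInfty

noncomputable def ofFin (m : ℕ) (g : ℕ → ℂ) : C₀(ℕ, ℂ) :=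
  ⟨⟨fun i => if i < m then g i else 0, continuous_of_discreteTopology⟩, by
    rw [Filter.cocompact_eq_cofinite]
    apply Filter.Tendsto.congr' (f₁ := fun _ => (0:ℂ))
    · rw [Filter.eventuallyEq_iff_exists_mem]
      refine ⟨(Set.Iio m)ᶜ, Set.Finite.compl_mem_cofinite (Set.finite_Iio m), fun i hi => ?_⟩
      simp only [Set.mem_compl_iff, Set.mem_Iio, not_lt] at hi
      simp [Nat.not_lt.2 hi]
    · exact tendsto_const_nhds⟩

@[simp] lemma ofFin_apply (m : ℕ) (g : ℕ → ℂ) (i : ℕ) :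
    ofFin m g i = if i < m then g i else 0 := rfl

lemma c0_norm_le {f : C₀(ℕ, ℂ)} {C : ℝ} (hC : 0 ≤ C) (h : ∀ i, ‖f i‖ ≤ C) : ‖f‖ ≤ C := by
  rw [← ZeroAtInftyContinuousMap.norm_toBCF_eq_norm]
  exact (BoundedContinuousFunction.norm_le hC).2 h

lemma c0_coord_le (f : C₀(ℕ, ℂ)) (i : ℕ) : ‖f i‖ ≤ ‖f‖ := by
  rw [← ZeroAtInftyContinuousMap.norm_toBCF_eq_norm]
  exact BoundedContinuousFunction.norm_coe_le_norm f.toBCF i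

-- triangle sum bound
lemma sum_tri (m k : ℕ) : (∑ i ∈ Finset.range m, (k - i)) * 2 ≤ k * (k+1) := by
  have h1 : (∑ i ∈ Finset.range m, (k - i)) ≤ ∑ i ∈ Finset.range (k+1), (k - i) := by
    rcases le_total m (k+1) with h | h
    · exact Finset.sum_le_sum_of_subset (Finset.range_subset_range.2 h)
    · rw [← Finset.sum_subset (Finset.range_subset_range.2 h) (fun x _ hx => by
        simp only [Finset.mem_range, not_lt] at hx ⊢; omega)]
  have h2 : ∑ i ∈ Finset.range (k+1), (k - i) = ∑ i ∈ Finset.range (k+1), i := by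
    rw [← Finset.sum_range_reflect (fun i => i) (k+1)]
    exact Finset.sum_congr rfl (fun i hi => by simp only [Finset.mem_range] at hi; omega)
  have h3 : (∑ i ∈ Finset.range (k+1), i) * 2 = (k+1) * k := Finset.sum_range_id_mul_two (k+1)
  calc (∑ i ∈ Finset.range m, (k - i)) * 2 ≤ (∑ i ∈ Finset.range (k+1), i) * 2 := by
        rw [← h2]; omega
    _ = k * (k+1) := by rw [h3]; ring

noncomputable def gridC (a h : ℝ) (c : ℕ) : Finset ℂ :=
  ((Finset.range c) ×ˢ (Finset.range c)).image
    (fun p => Complex.mk (-a + (p.1 + 1/2) * h) (-a + (p.2 + 1/2) * h))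

lemma gridC_card (a h : ℝ) (c : ℕ) : (gridC a h c).card ≤ c ^ 2 := by
  calc (gridC a h c).card ≤ ((Finset.range c) ×ˢ (Finset.range c)).card :=
        Finset.card_image_le
    _ = c ^ 2 := by simp [Finset.card_product, sq]

lemma cover1d {a h : ℝ} (ha : 0 < a) (hh : 0 < h) {c : ℕ} (hc : 2*a ≤ c*h) {t : ℝ}
    (ht : |t| ≤ a) : ∃ j : ℕ, j < c ∧ |t - (-a + (j + 1/2) * h)| ≤ h / 2 := by
  obtain ⟨ht1, ht2⟩ := abs_le.1 ht
  have hc1 : 1 ≤ c := by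
    rcases Nat.eq_zero_or_pos c with rfl | h1
    · exfalso; simp at hc; nlinarith
    · exact h1
  have hu0 : (0:ℝ) ≤ t + a := by linarith
  have hu2 : t + a ≤ c * h := by linarith
  have hfl0 : (0:ℤ) ≤ ⌊(t+a)/h⌋ := Int.floor_nonneg.2 (by positivity)
  set j0 : ℕ := ⌊(t+a)/h⌋.toNat with hj0
  have hj0r : (j0 : ℝ) = (⌊(t+a)/h⌋ : ℝ) := by
    rw [hj0]; exact_mod_cast congrArg (fun z : ℤ => (z : ℝ)) (Int.toNat_of_nonneg hfl0)
  by_cases hcase : j0 < c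
  · refine ⟨j0, hcase, ?_⟩
    have h1 : (j0:ℝ) * h ≤ t + a := by
      rw [hj0r]
      calc (⌊(t+a)/h⌋ : ℝ) * h ≤ ((t+a)/h) * h :=
            mul_le_mul_of_nonneg_right (Int.floor_le _) hh.le
        _ = t + a := by field_simp
    have h2 : t + a ≤ ((j0:ℝ) + 1) * h := by
      rw [hj0r]
      have := (Int.lt_floor_add_one ((t+a)/h)).le
      calc t + a = ((t+a)/h) * h := by field_simp
        _ ≤ ((⌊(t+a)/h⌋:ℝ) + 1) * h := mul_le_mul_of_nonneg_right this hh.le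
    rw [abs_le]; constructor <;> [linarith; linarith]
  · push_neg at hcase
    refine ⟨c - 1, by omega, ?_⟩
    have hcc : ((c - 1 : ℕ) : ℝ) = (c:ℝ) - 1 := by
      push_cast [Nat.cast_sub hc1]; ring
    have h1 : ((c:ℝ)) ≤ (j0 : ℝ) := by exact_mod_cast hcase
    have h2 : (j0 : ℝ) ≤ (t+a)/h := by rw [hj0r]; exact Int.floor_le _
    have h3 : (c:ℝ) * h ≤ t + a := by
      have := (le_div_iff₀ hh).1 (le_trans h1 h2)
      linarith
    rw [abs_le, hcc]; constructor <;> [linarith; linarith]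

lemma coverC {a h : ℝ} (ha : 0 < a) (hh : 0 < h) {c : ℕ} (hc : 2*a ≤ c*h) {z : ℂ}
    (hz : ‖z‖ ≤ a) : ∃ w ∈ gridC a h c, ‖z - w‖ ≤ h := by
  obtain ⟨j, hj, hjd⟩ := cover1d ha hh hc (le_trans (Complex.abs_re_le_norm z) hz)
  obtain ⟨k, hk, hkd⟩ := cover1d ha hh hc (le_trans (Complex.abs_im_le_norm z) hz)
  refine ⟨Complex.mk (-a + (j + 1/2) * h) (-a + (k + 1/2) * h), ?_, ?_⟩
  · exact Finset.mem_image.2 ⟨(j, k), Finset.mem_product.2 ⟨Finset.mem_range.2 hj,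
      Finset.mem_range.2 hk⟩, rfl⟩
  · calc ‖z - Complex.mk (-a + (j + 1/2) * h) (-a + (k + 1/2) * h)‖
        ≤ |(z - Complex.mk (-a + (j + 1/2) * h) (-a + (k + 1/2) * h)).re| +
          |(z - Complex.mk (-a + (j + 1/2) * h) (-a + (k + 1/2) * h)).im| :=
          Complex.norm_le_abs_re_add_abs_im _
      _ ≤ h/2 + h/2 := by
          apply add_le_add
          · simpa using hjd
          · simpa using hkd
      _ = h := by ring

noncomputable def packC (δ : ℝ) (d : ℕ) : Finset ℂ :=
  ((Finset.range d) ×ˢ (Finset.range d)).image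
    (fun p => Complex.mk (p.1 * δ) (p.2 * δ))

lemma packC_card {δ : ℝ} (hδ : 0 < δ) (d : ℕ) : (packC δ d).card = d ^ 2 := by
  rw [packC, Finset.card_image_of_injective _ ?_, Finset.card_product,
    Finset.card_range, sq]
  intro p q hpq
  have hre := congrArg Complex.re hpq
  have him := congrArg Complex.im hpq
  simp only [] at hre him
  have h1 : (p.1 : ℝ) = q.1 := mul_right_cancel₀ hδ.ne' hre
  have h2 : (p.2 : ℝ) = q.2 := mul_right_cancel₀ hδ.ne' him
  exact Prod.ext (by exact_mod_cast h1) (by exact_mod_cast h2)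

lemma packC_norm {δ : ℝ} (hδ : 0 < δ) {d : ℕ} {w : ℂ} (hw : w ∈ packC δ d) :
    ‖w‖ ≤ 2 * d * δ := by
  obtain ⟨p, hp, rfl⟩ := Finset.mem_image.1 hw
  obtain ⟨hp1, hp2⟩ := Finset.mem_product.1 hp
  rw [Finset.mem_range] at hp1 hp2
  calc ‖Complex.mk (p.1 * δ) (p.2 * δ)‖ ≤ |(p.1:ℝ) * δ| + |(p.2:ℝ) * δ| :=
        Complex.norm_le_abs_re_add_abs_im _
    _ ≤ (d:ℝ) * δ + (d:ℝ) * δ := by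
        rw [abs_of_nonneg (by positivity), abs_of_nonneg (by positivity)]
        have h1 : (p.1 : ℝ) ≤ d := by exact_mod_cast hp1.le
        have h2 : (p.2 : ℝ) ≤ d := by exact_mod_cast hp2.le
        nlinarith [hδ.le]
    _ = 2 * d * δ := by ring

lemma packC_sep {δ : ℝ} (hδ : 0 < δ) {d : ℕ} {w w' : ℂ} (hw : w ∈ packC δ d)
    (hw' : w' ∈ packC δ d) (hne : w ≠ w') : δ ≤ ‖w - w'‖ := by
  obtain ⟨p, hp, rfl⟩ := Finset.mem_image.1 hw
  obtain ⟨q, hq, rfl⟩ := Finset.mem_image.1 hw'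
  have key : ∀ a b : ℕ, a ≠ b → δ ≤ |(a:ℝ) * δ - (b:ℝ) * δ| := by
    intro a b hab
    have h1 : (1:ℝ) ≤ |(a:ℝ) - (b:ℝ)| := by
      have : ((a:ℤ) - b) ≠ 0 := by
        intro hz; apply hab; omega
      have h2 : (1:ℤ) ≤ |(a:ℤ) - b| := Int.one_le_abs this
      calc (1:ℝ) = ((1:ℤ):ℝ) := by norm_num
        _ ≤ ((|(a:ℤ) - b| : ℤ) : ℝ) := by exact_mod_cast h2
        _ = |(a:ℝ) - (b:ℝ)| := by push_cast [Int.cast_abs]; norm_num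
    calc δ = 1 * δ := (one_mul δ).symm
      _ ≤ |(a:ℝ) - (b:ℝ)| * δ := mul_le_mul_of_nonneg_right h1 hδ.le
      _ = |(a:ℝ) * δ - (b:ℝ) * δ| := by rw [← sub_mul, abs_mul, abs_of_nonneg hδ.le]
  have hpq : p.1 ≠ q.1 ∨ p.2 ≠ q.2 := by
    by_contra hcon
    push_neg at hcon
    exact hne (by rw [hcon.1, hcon.2])
  rcases hpq with h | h
  · calc δ ≤ |(p.1:ℝ) * δ - (q.1:ℝ) * δ| := key _ _ h
      _ = |(Complex.mk (p.1 * δ) (p.2 * δ) - Complex.mk (q.1 * δ) (q.2 * δ)).re| := by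
          simp [Complex.sub_re]
      _ ≤ ‖Complex.mk (p.1 * δ) (p.2 * δ) - Complex.mk (q.1 * δ) (q.2 * δ)‖ :=
          Complex.abs_re_le_norm _
  · calc δ ≤ |(p.2:ℝ) * δ - (q.2:ℝ) * δ| := key _ _ h
      _ = |(Complex.mk (p.1 * δ) (p.2 * δ) - Complex.mk (q.1 * δ) (q.2 * δ)).im| := by
          simp [Complex.sub_im]
      _ ≤ ‖Complex.mk (p.1 * δ) (p.2 * δ) - Complex.mk (q.1 * δ) (q.2 * δ)‖ :=
          Complex.abs_im_le_norm _

lemma upper_mem (ε : ℝ) (hε0 : 0 < ε) (hε1 : ε < 1) (n : ℕ) (hn : 1 ≤ n) :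
    0 < 32 * (max ε (1/2)) ^ Real.sqrt ((n:ℝ) - 1) ∧
    ∃ s : Finset C₀(ℕ, ℂ), s.card ≤ 2 ^ (n - 1) ∧
      {x : C₀(ℕ, ℂ) | ∀ k : ℕ, ‖x k‖ ≤ ε ^ (k + 1)} ⊆
        ⋃ y ∈ s, Metric.ball y (32 * (max ε (1/2)) ^ Real.sqrt ((n:ℝ) - 1)) := by
  set S := max ε (1/2) with hSdef
  have hS0 : 0 < S := lt_max_of_lt_right (by norm_num)
  have hSh : (1:ℝ)/2 ≤ S := le_max_right _ _
  have hS1 : S < 1 := max_lt hε1 (by norm_num)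
  have hεS : ε ≤ S := le_max_left _ _
  set N := n - 1 with hNdef
  have hNr : ((N:ℕ):ℝ) = (n:ℝ) - 1 := by
    rw [hNdef]; push_cast [Nat.cast_sub hn]; ring
  rw [← hNr]
  set q := Nat.sqrt N with hq
  set Kn := q + 1 with hKn
  set m := Kn + 1 with hm
  have hrS : 0 < S ^ Real.sqrt (N:ℝ) := Real.rpow_pos_of_pos hS0 _
  set h := 16 * S ^ Real.sqrt (N:ℝ) with hh
  have hhpos : 0 < h := by positivity
  refine ⟨by positivity, ?_⟩
  set c : ℕ → ℕ := fun i => 2 ^ (Kn - (i+4)) with hc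
  -- the sqrt bounds
  have hsqKn : Real.sqrt (N:ℝ) ≤ (Kn:ℝ) := by
    have := Real.real_sqrt_le_nat_sqrt_succ (a := N)
    rw [hKn]; push_cast; exact_mod_cast this
  -- key coordinate constraint
  have key : ∀ i : ℕ, 2 * ε^(i+1) ≤ (c i) * h := by
    intro i
    have h1 : ε^(i+1) ≤ S^(i+1) := pow_le_pow_left₀ hε0.le hεS _
    have h2 : (S:ℝ)^(i+1) = S ^ (((i+1:ℕ)):ℝ) := (Real.rpow_natCast S (i+1)).symm
    have h3 : S ^ (((i+1:ℕ)):ℝ) = S ^ Real.sqrt (N:ℝ) * S ^ (((i+1:ℕ):ℝ) - Real.sqrt (N:ℝ)) := by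
      rw [← Real.rpow_add hS0]; ring_nf
    have hone : (1:ℝ) ≤ 2^(Kn - (i+4)) := one_le_pow₀ (by norm_num)
    have h4 : S ^ (((i+1:ℕ):ℝ) - Real.sqrt (N:ℝ)) ≤ 8 * 2^(Kn - (i+4)) := by
      rcases le_or_gt (Real.sqrt (N:ℝ)) ((i+1:ℕ):ℝ) with hcmp | hcmp
      · calc S ^ (((i+1:ℕ):ℝ) - Real.sqrt (N:ℝ)) ≤ 1 :=
              Real.rpow_le_one hS0.le hS1.le (by linarith)
          _ ≤ 8 * 2^(Kn - (i+4)) := by linarith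
      · have hstep1 : S ^ (((i+1:ℕ):ℝ) - Real.sqrt (N:ℝ)) ≤
            (2:ℝ) ^ (Real.sqrt (N:ℝ) - ((i+1:ℕ):ℝ)) := by
          set y := Real.sqrt (N:ℝ) - ((i+1:ℕ):ℝ) with hy
          have hy0 : 0 ≤ y := by rw [hy]; linarith
          have e1 : S ^ (((i+1:ℕ):ℝ) - Real.sqrt (N:ℝ)) = (S ^ y)⁻¹ := by
            rw [show ((i+1:ℕ):ℝ) - Real.sqrt (N:ℝ) = -y by rw [hy]; ring,
              Real.rpow_neg hS0.le]
          have e2 : ((1:ℝ)/2) ^ y ≤ S ^ y := Real.rpow_le_rpow (by norm_num) hSh hy0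
          have e3 : ((1:ℝ)/2) ^ y = ((2:ℝ) ^ y)⁻¹ := by
            rw [one_div, Real.inv_rpow (by norm_num : (0:ℝ) ≤ 2)]
          have e4 : (0:ℝ) < (1/2:ℝ) ^ y := Real.rpow_pos_of_pos (by norm_num) _
          rw [e1]
          calc (S ^ y)⁻¹ ≤ (((1:ℝ)/2) ^ y)⁻¹ := by
                apply inv_anti₀ e4 e2
            _ = (2:ℝ) ^ y := by rw [e3, inv_inv]
        have hstep2 : (2:ℝ) ^ (Real.sqrt (N:ℝ) - ((i+1:ℕ):ℝ)) ≤
            (2:ℝ) ^ ((Kn:ℝ) - ((i+1:ℕ):ℝ)) :=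
          Real.rpow_le_rpow_of_exponent_le one_le_two (by linarith)
        have hstep3 : (2:ℝ) ^ ((Kn:ℝ) - ((i+1:ℕ):ℝ)) ≤ 8 * 2^(Kn - (i+4)) := by
          rcases le_or_gt (i+4) Kn with hc4 | hc4
          · have : (2:ℝ) ^ ((Kn:ℝ) - ((i+1:ℕ):ℝ)) = (2:ℝ) ^ ((Kn - (i+4) + 3 : ℕ):ℝ) := by
              congr 1
              push_cast [Nat.cast_sub hc4]
              ring
            rw [this, Real.rpow_natCast, pow_add]
            norm_num
            rw [mul_comm]
          · have hle : (Kn:ℝ) - ((i+1:ℕ):ℝ) ≤ 3 := by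
              have : (Kn:ℝ) ≤ (i:ℝ) + 4 := by exact_mod_cast hc4.le
              push_cast at this ⊢
              linarith
            calc (2:ℝ) ^ ((Kn:ℝ) - ((i+1:ℕ):ℝ)) ≤ (2:ℝ) ^ (3:ℝ) :=
                  Real.rpow_le_rpow_of_exponent_le one_le_two hle
              _ = 8 := by
                  rw [show (3:ℝ) = ((3:ℕ):ℝ) by norm_num, Real.rpow_natCast]
                  norm_num
              _ ≤ 8 * 2^(Kn - (i+4)) := by linarith
        exact le_trans hstep1 (le_trans hstep2 hstep3)
    have hcast : ((c i : ℕ) : ℝ) = 2^(Kn - (i+4)) := by rw [hc]; push_cast; ring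
    calc 2 * ε^(i+1) ≤ 2 * S^(i+1) := by linarith
      _ = 2 * (S ^ Real.sqrt (N:ℝ) * S ^ (((i+1:ℕ):ℝ) - Real.sqrt (N:ℝ))) := by
          rw [← h3, ← h2]
      _ ≤ 2 * (S ^ Real.sqrt (N:ℝ) * (8 * 2^(Kn - (i+4)))) := by
          apply mul_le_mul_of_nonneg_left _ (by norm_num)
          exact mul_le_mul_of_nonneg_left h4 hrS.le
      _ = (c i) * h := by rw [hcast, hh]; ring
  -- centers
  classical
  set T : Finset C₀(ℕ, ℂ) :=
    (Finset.pi (Finset.range m) (fun i => gridC (ε^(i+1)) h (c i))).image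
      (fun p => ofFin m (fun i => if hi : i ∈ Finset.range m then p i hi else 0)) with hT
  refine ⟨T, ?_, ?_⟩
  · -- cardinality
    have h1 : T.card ≤ ∏ i ∈ Finset.range m, (gridC (ε^(i+1)) h (c i)).card := by
      calc T.card ≤ (Finset.pi (Finset.range m) (fun i => gridC (ε^(i+1)) h (c i))).card :=
            Finset.card_image_le
        _ = ∏ i ∈ Finset.range m, (gridC (ε^(i+1)) h (c i)).card := Finset.card_pi _ _
    have h2 : ∏ i ∈ Finset.range m, (gridC (ε^(i+1)) h (c i)).card ≤
        ∏ i ∈ Finset.range m, 2 ^ ((Kn - (i+4)) * 2) := by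
      apply Finset.prod_le_prod'
      intro i _
      calc (gridC (ε^(i+1)) h (c i)).card ≤ (c i) ^ 2 := gridC_card _ _ _
        _ = 2 ^ ((Kn - (i+4)) * 2) := by rw [hc, ← pow_mul]
    have h3 : ∏ i ∈ Finset.range m, 2 ^ ((Kn - (i+4)) * 2) =
        2 ^ (∑ i ∈ Finset.range m, (Kn - (i+4)) * 2) := Finset.prod_pow_eq_pow_sum _ _ _
    have h4 : (∑ i ∈ Finset.range m, (Kn - (i+4)) * 2) ≤ N := by
      have e1 : ∀ i, Kn - (i+4) = (Kn - 4) - i := fun i => by omega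
      have e2 : (∑ i ∈ Finset.range m, (Kn - (i+4)) * 2) =
          (∑ i ∈ Finset.range m, ((Kn - 4) - i)) * 2 := by
        rw [Finset.sum_mul]
        exact Finset.sum_congr rfl (fun i _ => by rw [e1])
      rw [e2]
      calc (∑ i ∈ Finset.range m, ((Kn - 4) - i)) * 2 ≤ (Kn - 4) * ((Kn - 4) + 1) :=
            sum_tri m (Kn - 4)
        _ ≤ q * q := by
            have : Kn - 4 = q - 3 := by omega
            rw [this]
            rcases Nat.lt_or_ge q 3 with hq3 | hq3
            · have : q - 3 = 0 := by omega
              simp [this]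
            · exact Nat.mul_le_mul (by omega) (by omega)
        _ ≤ N := Nat.sqrt_le N
    calc T.card ≤ 2 ^ (∑ i ∈ Finset.range m, (Kn - (i+4)) * 2) := by
          rw [← h3]; exact le_trans h1 h2
      _ ≤ 2 ^ N := Nat.pow_le_pow_right (by norm_num) h4
  · -- coverage
    intro x hx
    simp only [Set.mem_setOf_eq] at hx
    have hex : ∀ i : ℕ, ∃ w ∈ gridC (ε^(i+1)) h (c i), ‖x i - w‖ ≤ h :=
      fun i => coverC (pow_pos hε0 _) hhpos (key i) (hx i)
    choose w hw1 hw2 using hex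
    have hp : (fun i _ => w i : ∀ i ∈ Finset.range m, ℂ) ∈
        Finset.pi (Finset.range m) (fun i => gridC (ε^(i+1)) h (c i)) :=
      Finset.mem_pi.2 (fun i _ => hw1 i)
    set y := ofFin m (fun i => if hi : i ∈ Finset.range m then w i else 0) with hy
    have hyT : y ∈ T := by
      rw [hT]
      exact Finset.mem_image.2 ⟨(fun i _ => w i), hp, rfl⟩
    refine Set.mem_iUnion₂.2 ⟨y, hyT, ?_⟩
    rw [Metric.mem_ball, dist_eq_norm]
    have hcoord : ∀ i, ‖(x - y) i‖ ≤ h := by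
      intro i
      have hsub : (x - y) i = x i - y i := rfl
      rw [hsub]
      by_cases him : i < m
      · have : y i = w i := by
          rw [hy, ofFin_apply, if_pos him, dif_pos (Finset.mem_range.2 him)]
        rw [this]
        exact hw2 i
      · have : y i = 0 := by rw [hy, ofFin_apply, if_neg him]
        rw [this, sub_zero]
        have l1 : ‖x i‖ ≤ ε ^ (i+1) := hx i
        have l2 : ε ^ (i+1) ≤ S ^ (i+1) := pow_le_pow_left₀ hε0.le hεS _
        have l3 : (S:ℝ)^(i+1) = S ^ (((i+1:ℕ)):ℝ) := (Real.rpow_natCast S (i+1)).symm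
        have l4 : S ^ (((i+1:ℕ)):ℝ) ≤ S ^ Real.sqrt (N:ℝ) := by
          apply Real.rpow_le_rpow_of_exponent_ge hS0 hS1.le
          have : (Kn:ℝ) ≤ ((i+1:ℕ):ℝ) := by
            push_cast
            have : m ≤ i := Nat.not_lt.1 him
            have : (m:ℝ) ≤ (i:ℝ) := by exact_mod_cast this
            push_cast at this
            have hmK : (m:ℝ) = (Kn:ℝ) + 1 := by rw [hm]; norm_num
            linarith
          linarith [hsqKn]
        have l5 : S ^ Real.sqrt (N:ℝ) ≤ h := by rw [hh]; nlinarith [hrS]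
        linarith
    have : ‖x - y‖ ≤ h := c0_norm_le hhpos.le hcoord
    have hhr : h < 32 * S ^ Real.sqrt (N:ℝ) := by rw [hh]; nlinarith [hrS]
    linarith

lemma lower_bound (ε : ℝ) (hε0 : 0 < ε) (hε1 : ε < 1) (n : ℕ) (hn : 1 ≤ n) {ρ : ℝ}
    (hρ0 : 0 < ρ) (t : Finset C₀(ℕ, ℂ)) (htc : t.card ≤ 2 ^ (n - 1))
    (hcov : {x : C₀(ℕ, ℂ) | ∀ k : ℕ, ‖x k‖ ≤ ε ^ (k + 1)} ⊆ ⋃ y ∈ t, Metric.ball y ρ) :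
    (min ε (1/2)) ^ ((n-1).sqrt + 3) / 2 ≤ ρ := by
  classical
  set sm := min ε (1/2) with hsmdef
  have hsm0 : 0 < sm := lt_min hε0 (by norm_num)
  have hsmh : sm ≤ 1/2 := min_le_right _ _
  have hsmε : sm ≤ ε := min_le_left _ _
  have hsminv : (2:ℝ) ≤ sm⁻¹ := by
    rw [show (2:ℝ) = ((1:ℝ)/2)⁻¹ by norm_num]
    exact inv_anti₀ hsm0 hsmh
  set N := n - 1 with hNdef
  set q := N.sqrt with hq
  set m' := q + 2 with hm'
  set δ := sm ^ (m' + 1) with hδ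
  have hδ0 : 0 < δ := pow_pos hsm0 _
  set d : ℕ → ℕ := fun i => 2 ^ (m' - (i+1)) with hd
  -- coordinate norm bound
  have key : ∀ i, i < m' → 2 * (d i) * δ ≤ ε ^ (i+1) := by
    intro i hi
    have e0 : ((d i : ℕ) : ℝ) = 2 ^ (m' - (i+1)) := by rw [hd]; push_cast; ring
    have e1 : 2 * ((2:ℝ) ^ (m' - (i+1))) = 2 ^ (m' - i) := by
      rw [show m' - i = (m' - (i+1)) + 1 by omega, pow_succ]
      ring
    have e2 : (2:ℝ) ^ (m' - i) ≤ (sm⁻¹) ^ (m' - i) :=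
      pow_le_pow_left₀ (by norm_num) hsminv _
    have e3 : (sm⁻¹) ^ (m' - i) * sm ^ (m' + 1) = sm ^ (i+1) := by
      have esplit : sm ^ (m' + 1) = sm ^ (m' - i) * sm ^ (i+1) := by
        rw [← pow_add]
        congr 1
        omega
      rw [inv_pow, esplit, inv_mul_cancel_left₀ (pow_ne_zero _ hsm0.ne')]
    have e4 : sm ^ (i+1) ≤ ε ^ (i+1) := pow_le_pow_left₀ hsm0.le hsmε _
    calc 2 * (d i) * δ = 2 * ((2:ℝ) ^ (m' - (i+1))) * sm ^ (m' + 1) := by rw [e0, hδ]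
      _ = (2:ℝ) ^ (m' - i) * sm ^ (m' + 1) := by rw [e1]
      _ ≤ (sm⁻¹) ^ (m' - i) * sm ^ (m' + 1) := by
          apply mul_le_mul_of_nonneg_right e2 (by positivity)
      _ = sm ^ (i+1) := e3
      _ ≤ ε ^ (i+1) := e4
  -- packing set
  set F : (∀ i ∈ Finset.range m', ℂ) → C₀(ℕ, ℂ) :=
    fun p => ofFin m' (fun i => if hi : i ∈ Finset.range m' then p i hi else 0) with hF
  set P : Finset C₀(ℕ, ℂ) :=
    (Finset.pi (Finset.range m') (fun i => packC δ (d i))).image F with hP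
  have hFcoord : ∀ (p : ∀ i ∈ Finset.range m', ℂ) (i : ℕ) (hi : i < m'),
      (F p) i = p i (Finset.mem_range.2 hi) := by
    intro p i hi
    rw [hF]
    simp only [ofFin_apply, if_pos hi, dif_pos (Finset.mem_range.2 hi)]
  have hFcoord' : ∀ (p : ∀ i ∈ Finset.range m', ℂ) (i : ℕ), m' ≤ i → (F p) i = 0 := by
    intro p i hi
    rw [hF]
    simp only [ofFin_apply, if_neg (Nat.not_lt.2 hi)]
  -- P is inside K
  have hPK : ∀ z ∈ P, ∀ k : ℕ, ‖z k‖ ≤ ε ^ (k+1) := by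
    intro z hz k
    obtain ⟨p, hp, rfl⟩ := Finset.mem_image.1 hz
    by_cases hk : k < m'
    · rw [hFcoord p k hk]
      have hmem : p k (Finset.mem_range.2 hk) ∈ packC δ (d k) :=
        Finset.mem_pi.1 hp k (Finset.mem_range.2 hk)
      calc ‖p k (Finset.mem_range.2 hk)‖ ≤ 2 * (d k) * δ := packC_norm hδ0 hmem
        _ ≤ ε ^ (k+1) := key k hk
    · rw [hFcoord' p k (Nat.not_lt.1 hk)]
      simp [pow_pos hε0 (k+1), le_of_lt (pow_pos hε0 (k+1))]
  -- cardinality of P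
  have hinj : Set.InjOn F ↑(Finset.pi (Finset.range m') (fun i => packC δ (d i))) := by
    intro p hp p' hp' heq
    funext i hi
    have hilt : i < m' := Finset.mem_range.1 hi
    have := congrArg (fun f : C₀(ℕ, ℂ) => f i) heq
    simpa only [hFcoord p i hilt, hFcoord p' i hilt] using this
  have hcardP : P.card = 2 ^ (m' * (m' - 1)) := by
    rw [hP, Finset.card_image_of_injOn hinj, Finset.card_pi]
    have e1 : ∀ i ∈ Finset.range m', (packC δ (d i)).card = 2 ^ ((m' - (i+1)) * 2) := by
      intro i _
      rw [packC_card hδ0, hd, ← pow_mul]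
    rw [Finset.prod_congr rfl e1, Finset.prod_pow_eq_pow_sum]
    congr 1
    have e2 : (∑ i ∈ Finset.range m', (m' - (i+1)) * 2) =
        (∑ i ∈ Finset.range m', (m' - 1 - i)) * 2 := by
      rw [Finset.sum_mul]
      exact Finset.sum_congr rfl (fun i _ => by congr 1; omega)
    rw [e2, Finset.sum_range_reflect (fun j => j) m', Finset.sum_range_id_mul_two]
  have hcard_lt : t.card < P.card := by
    have h1 : N + 1 ≤ m' * (m' - 1) := by
      have h2 : N < (q+1) * (q+1) := Nat.lt_succ_sqrt N
      have h3 : (q+1) * (q+1) ≤ (q+2) * (q+1) := Nat.mul_le_mul_right _ (by omega)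
      have h4 : m' * (m' - 1) = (q+2) * (q+1) := by rw [hm']; rfl
      omega
    calc t.card ≤ 2 ^ N := htc
      _ < 2 ^ (N + 1) := Nat.pow_lt_pow_right (by norm_num) (by omega)
      _ ≤ 2 ^ (m' * (m' - 1)) := Nat.pow_le_pow_right (by norm_num) h1
      _ = P.card := hcardP.symm
  -- separation
  have hsep : ∀ z ∈ P, ∀ z' ∈ P, z ≠ z' → δ ≤ dist z z' := by
    intro z hz z' hz' hne
    obtain ⟨p, hp, rfl⟩ := Finset.mem_image.1 hz
    obtain ⟨p', hp', rfl⟩ := Finset.mem_image.1 hz'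
    have hex : ∃ i, (F p) i ≠ (F p') i := by
      by_contra hcon
      push_neg at hcon
      exact hne (DFunLike.ext _ _ hcon)
    obtain ⟨i, hi⟩ := hex
    have hilt : i < m' := by
      by_contra hge
      push_neg at hge
      rw [hFcoord' p i hge, hFcoord' p' i hge] at hi
      exact hi rfl
    rw [hFcoord p i hilt, hFcoord p' i hilt] at hi
    have h1 : δ ≤ ‖p i (Finset.mem_range.2 hilt) - p' i (Finset.mem_range.2 hilt)‖ :=
      packC_sep hδ0 (Finset.mem_pi.1 hp i (Finset.mem_range.2 hilt))
        (Finset.mem_pi.1 hp' i (Finset.mem_range.2 hilt)) hi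
    have h2 : (F p - F p') i = (F p) i - (F p') i := rfl
    calc δ ≤ ‖(F p) i - (F p') i‖ := by
          rw [hFcoord p i hilt, hFcoord p' i hilt]; exact h1
      _ = ‖(F p - F p') i‖ := by rw [h2]
      _ ≤ ‖F p - F p'‖ := c0_coord_le _ _
      _ = dist (F p) (F p') := (dist_eq_norm _ _).symm
  -- pigeonhole
  set G : C₀(ℕ, ℂ) → C₀(ℕ, ℂ) :=
    fun z => if hz : ∃ y ∈ t, z ∈ Metric.ball y ρ then hz.choose else z with hG
  have hGspec : ∀ z ∈ P, G z ∈ t ∧ z ∈ Metric.ball (G z) ρ := by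
    intro z hz
    have hzK : z ∈ {x : C₀(ℕ, ℂ) | ∀ k : ℕ, ‖x k‖ ≤ ε ^ (k + 1)} := hPK z hz
    obtain ⟨y, hy1, hy2⟩ := Set.mem_iUnion₂.1 (hcov hzK)
    have hex : ∃ y ∈ t, z ∈ Metric.ball y ρ := ⟨y, hy1, hy2⟩
    rw [hG]
    simp only [dif_pos hex]
    exact ⟨hex.choose_spec.1, hex.choose_spec.2⟩
  obtain ⟨z, hz, z', hz', hne, heq⟩ :=
    Finset.exists_ne_map_eq_of_card_lt_of_maps_to hcard_lt (fun a ha => (hGspec a ha).1)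
  have hb1 : dist z (G z) < ρ := Metric.mem_ball.1 (hGspec z hz).2
  have hb2 : dist z' (G z) < ρ := by rw [heq]; exact Metric.mem_ball.1 (hGspec z' hz').2
  have hdist : dist z z' < 2 * ρ := by
    calc dist z z' ≤ dist z (G z) + dist z' (G z) := dist_triangle_right _ _ _
      _ < 2 * ρ := by linarith
  have hδρ : δ < 2 * ρ := lt_of_le_of_lt (hsep z hz z' hz' hne) hdist
  have hfin : δ = sm ^ (q + 3) := by rw [hδ, hm']
  rw [hfin] at hδρ
  linarith

lemma rpow_sqrt_le (Sb : ℝ) (hS0 : 0 < Sb) (hS1 : Sb < 1) {x : ℝ} (hx : 0 < x) :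
    Sb ^ Real.sqrt x ≤ 24 / ((-Real.log Sb)^4 * x^2) := by
  set L := -Real.log Sb with hL
  have hL0 : 0 < L := by
    rw [hL]
    simpa using Real.log_neg hS0 hS1
  have hsx : 0 ≤ Real.sqrt x := Real.sqrt_nonneg x
  have h1 : Sb ^ Real.sqrt x = Real.exp (-(L * Real.sqrt x)) := by
    rw [Real.rpow_def_of_pos hS0, hL]
    ring_nf
  have h2 : (L * Real.sqrt x)^4 / 24 ≤ Real.exp (L * Real.sqrt x) := by
    have ht : 0 ≤ L * Real.sqrt x := by positivity
    have hsum := Real.sum_le_exp_of_nonneg ht 5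
    have hsingle : (L * Real.sqrt x)^4 / (Nat.factorial 4) ≤
        ∑ i ∈ Finset.range 5, (L * Real.sqrt x)^i / (Nat.factorial i) := by
      apply Finset.single_le_sum (f := fun i => (L * Real.sqrt x)^i / (Nat.factorial i))
      · intro i _
        positivity
      · simp
    calc (L * Real.sqrt x)^4 / 24 = (L * Real.sqrt x)^4 / (Nat.factorial 4) := by norm_num [Nat.factorial]
      _ ≤ ∑ i ∈ Finset.range 5, (L * Real.sqrt x)^i / (Nat.factorial i) := hsingle
      _ ≤ Real.exp (L * Real.sqrt x) := hsum
  have h3 : (L * Real.sqrt x)^4 = L^4 * x^2 := by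
    rw [mul_pow]
    congr 1
    rw [show (4:ℕ) = 2*2 by norm_num, pow_mul, Real.sq_sqrt hx.le]
  have h4 : 0 < L^4 * x^2 := by positivity
  rw [h1, Real.exp_neg]
  rw [h3] at h2
  have h5 : L^4 * x^2 / 24 ≤ Real.exp (L * Real.sqrt x) := h2
  have h6 : 0 < Real.exp (L * Real.sqrt x) := Real.exp_pos _
  rw [inv_le_iff_one_le_mul₀ h6, ← div_le_iff₀' (by positivity : (0:ℝ) < 24 / (L^4 * x^2))]
  calc 1 / (24 / (L^4 * x^2)) = L^4 * x^2 / 24 := by field_simp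
    _ ≤ Real.exp (L * Real.sqrt x) := h5

end Aux

open ZeroAtInfty in
/-- Entropy numbers of `K = {x ∈ c₀ : |xₙ| ≤ εⁿ}` satisfy
`C₁ s^√(n-1) ≤ eₙ(K) ≤ C₂ S^√(n-1)` where `s = min(ε,1/2)`, `S = max(ε,1/2)`;
in particular `(eₙ(K))ₙ ∈ ℓ₁`. (Coordinates are indexed from `0`, so the
`n`-th coordinate of the paper corresponds to index `n - 1`.) -/
theorem stmt5 (ε : ℝ) (hε0 : 0 < ε) (hε1 : ε < 1)
    (K : Set C₀(ℕ, ℂ)) (hK : K = {x : C₀(ℕ, ℂ) | ∀ n : ℕ, ‖x n‖ ≤ ε ^ (n + 1)}) :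
    (∃ C₁ > (0 : ℝ), ∃ C₂ > (0 : ℝ), ∀ n : ℕ, 1 ≤ n →
      C₁ * (min ε (1 / 2)) ^ (Real.sqrt (n - 1)) ≤ entropyNum n K ∧
      entropyNum n K ≤ C₂ * (max ε (1 / 2)) ^ (Real.sqrt (n - 1))) ∧
    Summable (fun n : ℕ => entropyNum n K) := by
  subst hK
  have hS0 : 0 < max ε (1/2) := lt_max_of_lt_right (by norm_num)
  have hS1 : max ε (1/2) < 1 := max_lt hε1 (by norm_num)
  have hsm0 : 0 < min ε (1/2) := lt_min hε0 (by norm_num)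
  have hsm1 : min ε (1/2) < 1 := lt_of_le_of_lt (min_le_right _ _) (by norm_num)
  set K := {x : C₀(ℕ, ℂ) | ∀ n : ℕ, ‖x n‖ ≤ ε ^ (n + 1)} with hKdef
  have hupper : ∀ n : ℕ, 1 ≤ n →
      entropyNum n K ≤ 32 * (max ε (1/2)) ^ Real.sqrt ((n:ℝ) - 1) := by
    intro n hn
    obtain ⟨hpos, s, hcard, hcov⟩ := upper_mem ε hε0 hε1 n hn
    exact csInf_le ⟨0, fun y hy => hy.1.le⟩ ⟨hpos, s, hcard, hcov⟩
  have hlower : ∀ n : ℕ, 1 ≤ n →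
      (min ε (1/2)) ^ ((n-1).sqrt + 3) / 2 ≤ entropyNum n K := by
    intro n hn
    obtain ⟨hpos, s0, hcard0, hcov0⟩ := upper_mem ε hε0 hε1 n hn
    unfold entropyNum
    apply le_csInf
    · exact ⟨32 * (max ε (1/2)) ^ Real.sqrt ((n:ℝ) - 1), hpos, s0, hcard0, hcov0⟩
    rintro ρ ⟨hρ0, t, htc, hcovt⟩
    exact lower_bound ε hε0 hε1 n hn hρ0 t htc hcovt
  have h0 : ∀ n, 0 ≤ entropyNum n K := fun n => Real.sInf_nonneg (fun y hy => hy.1.le)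
  constructor
  · refine ⟨(min ε (1/2))^3/2, by positivity, 32, by norm_num, fun n hn => ⟨?_, ?_⟩⟩
    · -- lower bound
      have hNr : (((n - 1 : ℕ)):ℝ) = (n:ℝ) - 1 := by push_cast [Nat.cast_sub hn]; ring
      have key : (min ε (1/2))^3 * (min ε (1/2)) ^ Real.sqrt ((n:ℝ) - 1) ≤
          (min ε (1/2)) ^ ((n-1).sqrt + 3) := by
        have e1 : ((min ε (1/2)) : ℝ) ^ ((n-1).sqrt + 3) =
            (min ε (1/2)) ^ ((((n-1).sqrt + 3 : ℕ)) : ℝ) :=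
          (Real.rpow_natCast _ _).symm
        have e2 : (min ε (1/2)) ^ ((((n-1).sqrt + 3 : ℕ)) : ℝ) ≥
            (min ε (1/2)) ^ (Real.sqrt (((n-1:ℕ)):ℝ) + 3) := by
          apply Real.rpow_le_rpow_of_exponent_ge hsm0 hsm1.le
          push_cast
          have := Real.nat_sqrt_le_real_sqrt (a := n - 1)
          linarith
        have e3 : (min ε (1/2)) ^ (Real.sqrt (((n-1:ℕ)):ℝ) + 3) =
            (min ε (1/2)) ^ Real.sqrt (((n-1:ℕ)):ℝ) * (min ε (1/2))^3 := by
          rw [Real.rpow_add hsm0]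
          congr 1
          rw [show (3:ℝ) = ((3:ℕ):ℝ) by norm_num, Real.rpow_natCast]
        rw [e1, ← hNr]
        calc (min ε (1/2))^3 * (min ε (1/2)) ^ Real.sqrt (((n-1:ℕ)):ℝ)
            = (min ε (1/2)) ^ (Real.sqrt (((n-1:ℕ)):ℝ) + 3) := by rw [e3]; ring
          _ ≤ _ := e2
      have := hlower n hn
      calc (min ε (1/2))^3/2 * (min ε (1/2)) ^ Real.sqrt ((n:ℝ) - 1)
          ≤ (min ε (1/2)) ^ ((n-1).sqrt + 3) / 2 := by linarith
        _ ≤ entropyNum n K := this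
    · exact hupper n hn
  · -- summability
    set L := -Real.log (max ε (1/2)) with hL
    have hL0 : 0 < L := by
      rw [hL]; simpa using Real.log_neg hS0 hS1
    have hbase : Summable (fun i : ℕ => 1/((i:ℝ))^2) :=
      Real.summable_one_div_nat_pow.2 (by norm_num)
    have hshift : Summable (fun i : ℕ => 1/(((i:ℝ))+1)^2) := by
      have := (summable_nat_add_iff 1).2 hbase
      apply this.congr
      intro i
      push_cast
      ring
    have hg : Summable (fun i : ℕ => (32 * (24 / L^4)) * (1/(((i:ℝ))+1)^2)) :=
      hshift.mul_left _
    have h2 : Summable (fun i : ℕ => entropyNum (i+2) K) := by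
      apply Summable.of_nonneg_of_le (fun i => h0 _) _ hg
      intro i
      have hx : (0:ℝ) < (i:ℝ) + 1 := by positivity
      have hb1 : entropyNum (i+2) K ≤ 32 * (max ε (1/2)) ^ Real.sqrt ((i:ℝ) + 1) := by
        have := hupper (i+2) (by omega)
        have ecast : ((i+2:ℕ):ℝ) - 1 = (i:ℝ) + 1 := by push_cast; ring
        rwa [ecast] at this
      have hb2 : (max ε (1/2)) ^ Real.sqrt ((i:ℝ) + 1) ≤ 24 / (L^4 * ((i:ℝ)+1)^2) := by
        have := rpow_sqrt_le (max ε (1/2)) hS0 hS1 hx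
        rwa [← hL] at this
      calc entropyNum (i+2) K ≤ 32 * (max ε (1/2)) ^ Real.sqrt ((i:ℝ) + 1) := hb1
        _ ≤ 32 * (24 / (L^4 * ((i:ℝ)+1)^2)) := by linarith
        _ = (32 * (24 / L^4)) * (1/(((i:ℝ))+1)^2) := by
            field_simp
    exact (summable_nat_add_iff 2).1 h2
end

section
/- For 0 < ε < 1, the set K = {(x_n) ∈ c_0 : |x_n| ≤ ε^n} is a connected compact set satisfying (e_n(K))_n ∈ ℓ_1 and limsup_{n→∞} e_n(K)^{1/n} = 1. -/
open Filter Metric Set Topology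

namespace Stmt7Aux

open ZeroAtInfty ZeroAtInftyContinuousMap

noncomputable def mk0 (f : ℕ → ℂ) (hf : Tendsto f atTop (𝓝 0)) : C₀(ℕ, ℂ) :=
  ⟨⟨f, continuous_of_discreteTopology⟩, by rwa [cocompact_eq_cofinite, Nat.cofinite_eq_atTop]⟩

@[simp] lemma mk0_apply (f : ℕ → ℂ) (hf) (n : ℕ) : mk0 f hf n = f n := rfl

lemma dist_apply_le (x y : C₀(ℕ, ℂ)) (n : ℕ) : dist (x n) (y n) ≤ dist x y :=
  BoundedContinuousFunction.dist_coe_le_dist (f := x.toBCF) (g := y.toBCF) n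

lemma dist_le_of (x y : C₀(ℕ, ℂ)) {C : ℝ} (h0 : 0 ≤ C) (h : ∀ n, dist (x n) (y n) ≤ C) :
    dist x y ≤ C :=
  (BoundedContinuousFunction.dist_le (f := x.toBCF) (g := y.toBCF) h0).2 h

lemma cont_eval (n : ℕ) : Continuous (fun x : C₀(ℕ, ℂ) => x n) :=
  (continuous_eval_const (F := BoundedContinuousFunction ℕ ℂ) n).comp (isometry_toBCF).continuous

noncomputable def ext0 (m : ℕ) (v : Fin m → ℂ) : C₀(ℕ, ℂ) :=
  mk0 (fun n => if h : n < m then v ⟨n, h⟩ else 0) (by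
    refine Tendsto.congr' ?_ tendsto_const_nhds
    filter_upwards [eventually_ge_atTop m] with n hn
    simp [Nat.not_lt.2 hn])

lemma round_abs_le {x : ℝ} {R : ℝ} (hx : |x| ≤ R) : |(round x : ℝ)| ≤ R + 1 := by
  have h := abs_sub_round x
  have h2 : |(round x : ℝ)| - |x| ≤ 1/2 := (abs_sub_abs_le_abs_sub _ _).trans (by rwa [abs_sub_comm])
  linarith

lemma grid_approx {ρ R : ℝ} (hρ : 0 < ρ) (z : ℂ) (hz : ‖z‖ ≤ R) :
    ∃ a b : ℤ, |(a : ℝ)| ≤ R / ρ + 1 ∧ |(b : ℝ)| ≤ R / ρ + 1 ∧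
      ‖z - (ρ : ℂ) * (a + b * Complex.I)‖ ≤ ρ := by
  set a := round (z.re / ρ)
  set b := round (z.im / ρ)
  have hre : |z.re| ≤ R := (Complex.abs_re_le_norm z).trans hz
  have him : |z.im| ≤ R := (Complex.abs_im_le_norm z).trans hz
  have hdivre : |z.re / ρ| ≤ R / ρ := by
    rw [abs_div, abs_of_pos hρ]; gcongr
  have hdivim : |z.im / ρ| ≤ R / ρ := by
    rw [abs_div, abs_of_pos hρ]; gcongr
  refine ⟨a, b, round_abs_le hdivre, round_abs_le hdivim, ?_⟩
  have hw : ((ρ : ℂ) * (a + b * Complex.I)).re = ρ * a ∧ ((ρ : ℂ) * (a + b * Complex.I)).im = ρ * b := by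
    constructor <;> simp [Complex.mul_re, Complex.mul_im]
  have hrebound : |z.re - ρ * a| ≤ ρ / 2 := by
    have : z.re - ρ * a = ρ * (z.re / ρ - a) := by field_simp
    rw [this, abs_mul, abs_of_pos hρ]
    have := abs_sub_round (z.re / ρ)
    nlinarith
  have himbound : |z.im - ρ * b| ≤ ρ / 2 := by
    have : z.im - ρ * b = ρ * (z.im / ρ - b) := by field_simp
    rw [this, abs_mul, abs_of_pos hρ]
    have := abs_sub_round (z.im / ρ)
    nlinarith
  calc ‖z - (ρ : ℂ) * (a + b * Complex.I)‖
      ≤ |(z - (ρ : ℂ) * (a + b * Complex.I)).re| + |(z - (ρ : ℂ) * (a + b * Complex.I)).im| := by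
        exact Complex.norm_le_abs_re_add_abs_im _
    _ ≤ ρ := by rw [Complex.sub_re, Complex.sub_im, hw.1, hw.2]; linarith

def Kset (ε : ℝ) : Set C₀(ℕ, ℂ) := {x | ∀ n : ℕ, ‖x n‖ ≤ ε ^ (n + 1)}

lemma cover {ε : ℝ} (hε0 : 0 < ε) (hε1 : ε < 1) (m : ℕ) :
    ∃ s : Finset C₀(ℕ, ℂ), (s.card : ℝ) ≤ ((49/ε)^2) ^ ((m+1)^2) ∧
      Kset ε ⊆ ⋃ c ∈ s, ball c (2 * ε ^ (m + 1)) := by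
  classical
  have hρ : (0:ℝ) < ε ^ (m+1) := pow_pos hε0 _
  have hD1 : (1:ℝ) ≤ 49/ε := by rw [le_div_iff₀ hε0, one_mul]; linarith
  set N : ℕ → ℕ := fun k => ⌈ε^(k+1) / ε^(m+1)⌉₊ + 1 with hN
  set G : Fin m → Finset ℂ := fun k =>
    ((Finset.Icc (-(N k : ℤ)) (N k)) ×ˢ (Finset.Icc (-(N k : ℤ)) (N k))).image
      (fun p => (ε^(m+1) : ℂ) * (p.1 + p.2 * Complex.I)) with hG
  refine ⟨(Fintype.piFinset G).image (fun v => ext0 m v), ?_, ?_⟩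
  · calc ((Finset.image (fun v => ext0 m v) (Fintype.piFinset G)).card : ℝ)
        ≤ ((Fintype.piFinset G).card : ℝ) := by exact_mod_cast Finset.card_image_le
      _ = ∏ k : Fin m, ((G k).card : ℝ) := by rw [Fintype.card_piFinset]; push_cast; ring
      _ ≤ ∏ _k : Fin m, (((49/ε)^2) ^ (m+1)) := by
          refine Finset.prod_le_prod (fun _ _ => by positivity) (fun k _ => ?_)
          set y : ℝ := ε^((k:ℕ)+1) / ε^(m+1) with hy
          have hy0 : 0 ≤ y := by positivity
          have hy1 : (1:ℝ) ≤ y := by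
            rw [hy, le_div_iff₀ hρ, one_mul]
            exact pow_le_pow_of_le_one hε0.le hε1.le (by omega)
          have hcard : (G k).card ≤ (2 * N (k:ℕ) + 1)^2 := by
            refine Finset.card_image_le.trans ?_
            rw [Finset.card_product, Int.card_Icc]
            have : ((N (k:ℕ) : ℤ) + 1 - (-(N (k:ℕ) : ℤ))).toNat = 2 * N (k:ℕ) + 1 := by omega
            rw [this, sq]
          have h2N : ((2 * N (k:ℕ) + 1 : ℕ) : ℝ) ≤ 7 * y := by
            have hceil : (⌈y⌉₊ : ℝ) ≤ y + 1 := (Nat.ceil_lt_add_one hy0).le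
            rw [hN]; push_cast
            linarith
          have hyinv : y ≤ (1/ε)^(m+1) := by
            rw [hy, div_pow, one_pow]
            gcongr
            exact pow_le_one₀ hε0.le hε1.le
          calc ((G k).card : ℝ) ≤ (((2 * N (k:ℕ) + 1)^2 : ℕ) : ℝ) := Nat.cast_le.2 hcard
            _ = (((2 * N (k:ℕ) + 1 : ℕ)) : ℝ)^2 := by push_cast; ring
            _ ≤ (7 * (1/ε)^(m+1))^2 := by
                refine pow_le_pow_left₀ (Nat.cast_nonneg _) (h2N.trans ?_) 2
                linarith
            _ = 49 * (1/ε^2)^(m+1) := by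
                rw [mul_pow, ← pow_mul, pow_mul' (1/ε) (m+1) 2, div_pow, one_pow]
                norm_num
            _ ≤ (49^2)^(m+1) * (1/ε^2)^(m+1) := by
                refine mul_le_mul_of_nonneg_right ?_ (by positivity)
                calc (49:ℝ) ≤ 49^2 := by norm_num
                  _ ≤ (49^2)^(m+1) := le_self_pow₀ (by norm_num) (by omega)
            _ = ((49/ε)^2) ^ (m+1) := by
                rw [← mul_pow]
                congr 1
                field_simp
      _ = (((49/ε)^2) ^ (m+1))^m := by rw [Finset.prod_const, Finset.card_univ, Fintype.card_fin]
      _ ≤ ((49/ε)^2) ^ ((m+1)^2) := by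
          rw [← pow_mul]
          refine pow_le_pow_right₀ (by nlinarith) (by nlinarith)
  · intro x hx
    have H : ∀ k : Fin m, ∃ a b : ℤ, |(a : ℝ)| ≤ ε^((k:ℕ)+1) / ε^(m+1) + 1 ∧
        |(b : ℝ)| ≤ ε^((k:ℕ)+1) / ε^(m+1) + 1 ∧
        ‖x k - ((ε^(m+1) : ℝ) : ℂ) * (a + b * Complex.I)‖ ≤ ε^(m+1) :=
      fun k => grid_approx hρ (x k) (hx k)
    choose A B hA hB happ using H
    set v : Fin m → ℂ := fun k => ((ε^(m+1) : ℝ) : ℂ) * (A k + B k * Complex.I) with hv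
    have hvmem : v ∈ Fintype.piFinset G := by
      rw [Fintype.mem_piFinset]
      intro k
      rw [hG]
      refine Finset.mem_image.2 ⟨(A k, B k), ?_, by rw [hv]; push_cast; ring⟩
      rw [Finset.mem_product, Finset.mem_Icc, Finset.mem_Icc]
      have hNk : ε^((k:ℕ)+1) / ε^(m+1) + 1 ≤ (N (k:ℕ) : ℝ) := by
        rw [hN]; push_cast
        have := Nat.le_ceil (ε^((k:ℕ)+1) / ε^(m+1))
        linarith
      have h1 := abs_le.1 ((hA k).trans hNk)
      have h2 := abs_le.1 ((hB k).trans hNk)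
      have hA1 : (-(N (k:ℕ) : ℤ)) ≤ A k := by exact_mod_cast h1.1
      have hA2 : A k ≤ (N (k:ℕ) : ℤ) := by exact_mod_cast h1.2
      have hB1 : (-(N (k:ℕ) : ℤ)) ≤ B k := by exact_mod_cast h2.1
      have hB2 : B k ≤ (N (k:ℕ) : ℤ) := by exact_mod_cast h2.2
      exact ⟨⟨hA1, hA2⟩, hB1, hB2⟩
    have hdist : dist x (ext0 m v) ≤ ε^(m+1) := by
      refine dist_le_of _ _ hρ.le (fun n => ?_)
      by_cases h : n < m
      · have he : (ext0 m v) n = v ⟨n, h⟩ := by simp [ext0, h]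
        rw [he, dist_eq_norm, hv]
        exact happ ⟨n, h⟩
      · have he : (ext0 m v) n = 0 := by simp [ext0, h]
        rw [he, dist_zero_right]
        exact (hx n).trans (pow_le_pow_of_le_one hε0.le hε1.le (by omega))
    exact Set.mem_iUnion₂.2 ⟨ext0 m v, Finset.mem_image_of_mem _ hvmem,
      mem_ball.2 (hdist.trans_lt (by linarith))⟩

lemma Kball {ε : ℝ} (hε0 : 0 < ε) (hε1 : ε < 1) : Kset ε ⊆ ball (0 : C₀(ℕ, ℂ)) 1 := by
  intro x hx
  rw [mem_ball]
  have : dist x 0 ≤ ε := by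
    refine dist_le_of x 0 hε0.le (fun n => ?_)
    have h0 : (0 : C₀(ℕ, ℂ)) n = 0 := rfl
    rw [h0, dist_zero_right]
    have h1 : ε ^ (n+1) ≤ ε ^ 1 := pow_le_pow_of_le_one hε0.le hε1.le (by omega)
    rw [pow_one] at h1
    exact (hx n).trans h1
  linarith

lemma one_mem_entropySet {ε : ℝ} (hε0 : 0 < ε) (hε1 : ε < 1) (n : ℕ) :
    (1:ℝ) ∈ {r : ℝ | 0 < r ∧ ∃ s : Finset C₀(ℕ, ℂ), s.card ≤ 2 ^ (n - 1) ∧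
      Kset ε ⊆ ⋃ x ∈ s, Metric.ball x r} := by
  refine ⟨one_pos, {0}, by simpa using Nat.one_le_two_pow, ?_⟩
  intro x hx
  exact Set.mem_iUnion₂.2 ⟨0, Finset.mem_singleton_self 0, Kball hε0 hε1 hx⟩

lemma entropy_bddBelow {X : Type*} [MetricSpace X] (n : ℕ) (L : Set X) :
    BddBelow {r : ℝ | 0 < r ∧ ∃ s : Finset X, s.card ≤ 2 ^ (n - 1) ∧ L ⊆ ⋃ x ∈ s, Metric.ball x r} :=
  ⟨0, fun r hr => hr.1.le⟩

lemma entropy_le_one {ε : ℝ} (hε0 : 0 < ε) (hε1 : ε < 1) (n : ℕ) :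
    entropyNum n (Kset ε) ≤ 1 :=
  csInf_le (entropy_bddBelow n _) (one_mem_entropySet hε0 hε1 n)

lemma entropy_nonneg {X : Type*} [MetricSpace X] (n : ℕ) (L : Set X) :
    0 ≤ entropyNum n L :=
  Real.sInf_nonneg (fun r hr => hr.1.le)

lemma pack {ε : ℝ} (hε0 : 0 < ε) (hε1 : ε < 1) {n m : ℕ}
    (hcond : (2:ℝ)^(n-1) * (2 * ε^(m+1))^m < 1) :
    ε^(2*m+1) ≤ entropyNum n (Kset ε) := by
  classical
  have hδ : (0:ℝ) < 2 * ε^(2*m+1) := by positivity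
  set c : ℕ := ⌊1/(2*ε^(m+1))⌋₊ + 1 with hc
  set φ : (Fin m → ℕ) → C₀(ℕ, ℂ) :=
    fun v => ext0 m (fun k => (((v k : ℝ) * (2 * ε^(2*m+1)) : ℝ) : ℂ)) with hφ
  set T : Finset C₀(ℕ, ℂ) := (Fintype.piFinset fun _ : Fin m => Finset.range c).image φ with hT
  have hsep : ∀ u v : Fin m → ℕ, u ≠ v → 2 * ε^(2*m+1) ≤ dist (φ u) (φ v) := by
    intro u v huv
    obtain ⟨k, hk⟩ := Function.ne_iff.1 huv
    have h1 : (1:ℝ) ≤ |(u k : ℝ) - (v k : ℝ)| := by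
      have hne : u k ≠ v k := hk
      have h2 : (1:ℤ) ≤ |(u k : ℤ) - (v k : ℤ)| := Int.one_le_abs (by omega)
      have h3 : ((1:ℤ):ℝ) ≤ ((|(u k : ℤ) - (v k : ℤ)| : ℤ) : ℝ) := Int.cast_le.2 h2
      push_cast at h3
      exact h3
    calc 2 * ε^(2*m+1) = 1 * (2 * ε^(2*m+1)) := (one_mul _).symm
      _ ≤ |(u k : ℝ) - (v k : ℝ)| * (2 * ε^(2*m+1)) := by
          exact mul_le_mul_of_nonneg_right h1 hδ.le
      _ = ‖(φ u) (k : ℕ) - (φ v) (k : ℕ)‖ := by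
          have hu : (φ u) (k : ℕ) = (((u k : ℝ) * (2 * ε^(2*m+1)) : ℝ) : ℂ) := by
            simp [hφ, ext0, k.isLt]
          have hv' : (φ v) (k : ℕ) = (((v k : ℝ) * (2 * ε^(2*m+1)) : ℝ) : ℂ) := by
            simp [hφ, ext0, k.isLt]
          rw [hu, hv', ← Complex.ofReal_sub, Complex.norm_real, Real.norm_eq_abs,
            ← sub_mul, abs_mul, abs_of_pos hδ]
      _ = dist ((φ u) (k:ℕ)) ((φ v) (k:ℕ)) := (dist_eq_norm _ _).symm
      _ ≤ dist (φ u) (φ v) := dist_apply_le _ _ _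
  have hinj : Set.InjOn φ (Fintype.piFinset fun _ : Fin m => Finset.range c) := by
    intro u _ v _ h
    by_contra huv
    have := hsep u v huv
    rw [h, dist_self] at this
    linarith
  have hcardT : (T.card : ℝ) = (c:ℝ)^m := by
    rw [hT, Finset.card_image_of_injOn hinj, Fintype.card_piFinset]
    simp
  have hTK : ∀ t ∈ T, t ∈ Kset ε := by
    intro t ht
    obtain ⟨v, hv, rfl⟩ := Finset.mem_image.1 ht
    intro j
    by_cases h : j < m
    · have he : (φ v) j = (((v ⟨j, h⟩ : ℝ) * (2 * ε^(2*m+1)) : ℝ) : ℂ) := by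
        simp [hφ, ext0, h]
      rw [he, Complex.norm_real, Real.norm_eq_abs, abs_mul, abs_of_pos hδ, Nat.abs_cast]
      have hvlt : (v ⟨j, h⟩ : ℝ) ≤ (c:ℝ) - 1 := by
        have := Fintype.mem_piFinset.1 hv ⟨j, h⟩
        rw [Finset.mem_range] at this
        have : (v ⟨j, h⟩ : ℝ) ≤ ((c - 1 : ℕ) : ℝ) := by exact_mod_cast Nat.le_sub_one_of_lt this
        simpa [hc] using this
      have hfloor : ((c:ℝ) - 1) ≤ 1/(2*ε^(m+1)) := by
        have h1 : ((⌊1/(2*ε^(m+1))⌋₊ : ℝ)) ≤ 1/(2*ε^(m+1)) := Nat.floor_le (by positivity)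
        simp only [hc]; push_cast; linarith
      calc (v ⟨j, h⟩ : ℝ) * (2 * ε^(2*m+1)) ≤ (1/(2*ε^(m+1))) * (2 * ε^(2*m+1)) := by
            refine mul_le_mul_of_nonneg_right (hvlt.trans hfloor) hδ.le
        _ = ε^m := by
            rw [show 2*m+1 = m + (m+1) by ring, pow_add]
            field_simp
            ring
        _ ≤ ε^(j+1) := pow_le_pow_of_le_one hε0.le hε1.le (by omega)
    · have he : (φ v) j = 0 := by simp [hφ, ext0, h]
      rw [he, norm_zero]
      positivity
  refine le_csInf ⟨1, one_mem_entropySet hε0 hε1 n⟩ ?_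
  rintro b ⟨hb0, s, hscard, hscover⟩
  by_contra hlt
  push_neg at hlt
  have hmaps : ∀ t ∈ T, ∃ z ∈ s, t ∈ ball z b := by
    intro t ht
    have := hscover (hTK t ht)
    simpa using this
  set f : C₀(ℕ, ℂ) → C₀(ℕ, ℂ) :=
    fun t => if h : ∃ z ∈ s, t ∈ ball z b then h.choose else t with hf
  have hcardlt : s.card < T.card := by
    have h1 : ((2:ℝ))^(n-1) < (c:ℝ)^m := by
      have hpos : (0:ℝ) < (2 * ε^(m+1))^m := by positivity
      rw [← lt_div_iff₀ hpos] at hcond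
      refine hcond.trans_le ?_
      rw [div_eq_mul_inv, one_mul, ← inv_pow]
      refine pow_le_pow_left₀ (by positivity) ?_ m
      rw [← one_div]
      exact (Nat.lt_floor_add_one _).le.trans (by simp [hc])
    have h2 : (s.card : ℝ) < (T.card : ℝ) := by
      calc (s.card : ℝ) ≤ (2:ℝ)^(n-1) := by exact_mod_cast hscard
        _ < (c:ℝ)^m := h1
        _ = (T.card : ℝ) := hcardT.symm
    exact_mod_cast h2
  have hmapsf : ∀ t ∈ T, f t ∈ s := by
    intro t ht
    have h := hmaps t ht
    rw [hf]
    simp only [dif_pos h]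
    exact h.choose_spec.1
  have hballf : ∀ t ∈ T, t ∈ ball (f t) b := by
    intro t ht
    have h := hmaps t ht
    rw [hf]
    simp only [dif_pos h]
    exact h.choose_spec.2
  obtain ⟨t₁, ht₁, t₂, ht₂, hne, heq⟩ :=
    Finset.exists_ne_map_eq_of_card_lt_of_maps_to hcardlt hmapsf
  have hd12 : dist t₁ t₂ < 2 * b := by
    have hb1 : dist t₁ (f t₁) < b := mem_ball.1 (hballf t₁ ht₁)
    have hb2 : dist t₂ (f t₂) < b := mem_ball.1 (hballf t₂ ht₂)
    calc dist t₁ t₂ ≤ dist t₁ (f t₁) + dist (f t₂) t₂ := by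
          rw [heq]; exact dist_triangle _ _ _
      _ < 2 * b := by rw [dist_comm (f t₂) t₂]; linarith
  obtain ⟨u, hu, hut⟩ := Finset.mem_image.1 ht₁
  obtain ⟨v, hv, hvt⟩ := Finset.mem_image.1 ht₂
  have huv : u ≠ v := by
    rintro rfl
    exact hne (hut.symm.trans hvt)
  have := hsep u v huv
  rw [hut, hvt] at this
  linarith

lemma Kset_closed {ε : ℝ} : IsClosed (Kset ε) := by
  have : Kset ε = ⋂ j : ℕ, {x : C₀(ℕ, ℂ) | ‖x j‖ ≤ ε ^ (j+1)} := by
    ext x; simp [Kset, Set.mem_iInter]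
  rw [this]
  exact isClosed_iInter (fun j => isClosed_le ((cont_eval j).norm) continuous_const)

lemma Kset_convex {ε : ℝ} : Convex ℝ (Kset ε) := by
  intro x hx y hy a b ha hb hab
  intro j
  have hco : (a • x + b • y) j = a • (x j) + b • (y j) := rfl
  rw [hco]
  calc ‖a • x j + b • y j‖ ≤ ‖a • x j‖ + ‖b • y j‖ := norm_add_le _ _
    _ = a * ‖x j‖ + b * ‖y j‖ := by
        rw [norm_smul, norm_smul, Real.norm_eq_abs, Real.norm_eq_abs, abs_of_nonneg ha,
          abs_of_nonneg hb]
    _ ≤ a * ε^(j+1) + b * ε^(j+1) := by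
        have := hx j; have := hy j
        gcongr
    _ = ε^(j+1) := by rw [← add_mul, hab, one_mul]

lemma Kset_connected {ε : ℝ} (hε0 : 0 < ε) : IsConnected (Kset ε) := by
  refine Kset_convex.isConnected ⟨0, fun n => ?_⟩
  have h0 : (0 : C₀(ℕ, ℂ)) n = 0 := rfl
  rw [h0, norm_zero]
  positivity

lemma Kset_compact {ε : ℝ} (hε0 : 0 < ε) (hε1 : ε < 1) : IsCompact (Kset ε) := by
  refine TotallyBounded.isCompact_of_isClosed (Metric.totallyBounded_iff.2 ?_) Kset_closed
  intro δ hδ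
  obtain ⟨M, hM⟩ := ((tendsto_pow_atTop_nhds_zero_of_lt_one hε0.le hε1).eventually
    (gt_mem_nhds (by positivity : (0:ℝ) < δ/2))).exists
  obtain ⟨s, _, hcover⟩ := cover hε0 hε1 M
  refine ⟨↑s, s.finite_toSet, hcover.trans ?_⟩
  refine Set.iUnion₂_mono (fun c _ => ball_subset_ball ?_)
  have : ε^(M+1) ≤ ε^M := pow_le_pow_of_le_one hε0.le hε1.le (by omega)
  linarith

lemma entropy_le {ε : ℝ} (hε0 : 0 < ε) (hε1 : ε < 1) {n m : ℕ}
    (h : ((49/ε)^2) ^ ((m+1)^2) ≤ (2:ℝ)^(n-1)) :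
    entropyNum n (Kset ε) ≤ 2 * ε^(m+1) := by
  obtain ⟨s, hcard, hcover⟩ := cover hε0 hε1 m
  refine csInf_le (entropy_bddBelow n _) ⟨by positivity, s, ?_, hcover⟩
  exact_mod_cast hcard.trans h

lemma sqrt_div_summable {q : ℝ} (hq0 : 0 ≤ q) (hq1 : q < 1) {B : ℕ} (hB : 0 < B) :
    Summable (fun n : ℕ => q ^ (Nat.sqrt (n / B))) := by
  classical
  have habs : ‖q‖ < 1 := by rwa [Real.norm_eq_abs, abs_of_nonneg hq0]
  have hg : Summable (fun j : ℕ => (B:ℝ) * (((j:ℝ)+1)^2 * q^j)) := by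
    refine Summable.mul_left _ ?_
    have h2 := summable_pow_mul_geometric_of_norm_lt_one (R := ℝ) 2 habs
    have h1 := summable_pow_mul_geometric_of_norm_lt_one (R := ℝ) 1 habs
    have h0 := summable_geometric_of_lt_one hq0 hq1
    have := (h2.add ((h1.mul_left 2).add h0))
    refine this.congr (fun j => ?_)
    push_cast
    ring
  refine summable_of_sum_range_le (c := ∑' j : ℕ, (B:ℝ) * (((j:ℝ)+1)^2 * q^j))
    (fun n => by positivity) (fun N => ?_)
  have hmaps : ∀ n ∈ Finset.range N, Nat.sqrt (n / B) ∈ Finset.range N := by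
    intro n hn
    rw [Finset.mem_range] at hn ⊢
    exact lt_of_le_of_lt ((Nat.sqrt_le_self _).trans (Nat.div_le_self _ _)) hn
  rw [← Finset.sum_fiberwise_of_maps_to' hmaps (fun j => q ^ j)]
  have hbound : ∀ j ∈ Finset.range N,
      ∑ _n ∈ (Finset.range N).filter (fun n => Nat.sqrt (n / B) = j), q ^ j
        ≤ (B:ℝ) * (((j:ℝ)+1)^2 * q^j) := by
    intro j _
    rw [Finset.sum_const, nsmul_eq_mul]
    have hcard : ((Finset.range N).filter (fun n => Nat.sqrt (n / B) = j)).card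
        ≤ (j+1)*(j+1)*B := by
      refine (Finset.card_le_card ?_).trans (by rw [Finset.card_range])
      intro n hn
      rw [Finset.mem_filter] at hn
      rw [Finset.mem_range]
      have h1 : n / B < (j+1)*(j+1) := by
        have := Nat.lt_succ_sqrt (n / B)
        rw [hn.2] at this
        exact this
      calc n < ((j+1)*(j+1)) * B := (Nat.div_lt_iff_lt_mul hB).1 h1
        _ ≤ (j+1)*(j+1)*B := le_rfl
    calc (((Finset.range N).filter (fun n => Nat.sqrt (n / B) = j)).card : ℝ) * q ^ j
        ≤ (((j+1)*(j+1)*B : ℕ) : ℝ) * q ^ j := by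
          refine mul_le_mul_of_nonneg_right ?_ (by positivity)
          exact_mod_cast hcard
      _ = (B:ℝ) * (((j:ℝ)+1)^2 * q^j) := by push_cast; ring
  calc ∑ j ∈ Finset.range N, ∑ _n ∈ (Finset.range N).filter (fun n => Nat.sqrt (n / B) = j), q ^ j
      ≤ ∑ j ∈ Finset.range N, (B:ℝ) * (((j:ℝ)+1)^2 * q^j) := Finset.sum_le_sum hbound
    _ ≤ ∑' j : ℕ, (B:ℝ) * (((j:ℝ)+1)^2 * q^j) := Summable.sum_le_tsum _ (fun j _ => by positivity) hg

lemma entropy_upper_tail {ε : ℝ} (hε0 : 0 < ε) (hε1 : ε < 1) :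
    ∃ b : ℕ, 0 < b ∧ ∀ n, 4*b+2 ≤ n →
      entropyNum n (Kset ε) ≤ 2 * ε ^ (Nat.sqrt (n/(4*b)) + 1) := by
  obtain ⟨b, hb⟩ := pow_unbounded_of_one_lt ((49/ε)^2) (one_lt_two (α := ℝ))
  have hD1 : (1:ℝ) < (49/ε)^2 := by
    have h49 : (1:ℝ) < 49/ε := by rw [lt_div_iff₀ hε0]; linarith
    nlinarith
  have hb0 : 0 < b := by
    rcases Nat.eq_zero_or_pos b with h | h
    · exfalso
      subst h
      rw [pow_zero] at hb
      linarith
    · exact h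
  refine ⟨b, hb0, fun n hn => ?_⟩
  set m := Nat.sqrt (n/(4*b)) with hm
  refine entropy_le hε0 hε1 ?_
  have hmm : m*m ≤ n/(4*b) := Nat.sqrt_le _
  have hx : b*((n/4)/b) ≤ n/4 := by
    calc b*((n/4)/b) = ((n/4)/b)*b := mul_comm _ _
      _ ≤ n/4 := Nat.div_mul_le_self _ _
  have hdd : (n/4)/b = n/(4*b) := Nat.div_div_eq_div_mul n 4 b
  have hexp : b*(m+1)^2 ≤ n - 1 := by
    have h1 : (m+1)^2 ≤ 2*(m*m) + 2 := by nlinarith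
    have h2 : b*(m+1)^2 ≤ 2*(b*(n/(4*b))) + 2*b := by
      calc b*(m+1)^2 ≤ b*(2*(m*m)+2) := Nat.mul_le_mul_left b h1
        _ ≤ b*(2*(n/(4*b))+2) := Nat.mul_le_mul_left b (by omega)
        _ = 2*(b*(n/(4*b))) + 2*b := by ring
    rw [← hdd] at h2
    omega
  calc ((49/ε)^2)^((m+1)^2) ≤ ((2:ℝ)^b)^((m+1)^2) := by
        exact pow_le_pow_left₀ (by positivity) hb.le _
    _ = (2:ℝ)^(b*(m+1)^2) := by rw [← pow_mul]
    _ ≤ (2:ℝ)^(n-1) := pow_le_pow_right₀ one_le_two hexp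

lemma summable_entropy {ε : ℝ} (hε0 : 0 < ε) (hε1 : ε < 1) :
    Summable (fun n : ℕ => entropyNum n (Kset ε)) := by
  obtain ⟨b, hb0, hbound⟩ := entropy_upper_tail hε0 hε1
  have hB : 0 < 4*b := by omega
  have hcomp : Summable (fun n : ℕ => (2*ε) * ε ^ (Nat.sqrt (n/(4*b)))) :=
    (sqrt_div_summable hε0.le hε1 hB).mul_left _
  refine (summable_nat_add_iff (4*b+2)).1 ?_
  refine Summable.of_nonneg_of_le (fun n => entropy_nonneg _ _) (fun n => ?_)
    ((summable_nat_add_iff (4*b+2)).2 hcomp)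
  have h := hbound (n + (4*b+2)) (by omega)
  calc entropyNum (n + (4*b+2)) (Kset ε) ≤ 2 * ε ^ (Nat.sqrt ((n+(4*b+2))/(4*b)) + 1) := h
    _ = (2*ε) * ε ^ (Nat.sqrt ((n+(4*b+2))/(4*b))) := by rw [pow_succ]; ring

lemma entropy_lower_tail {ε : ℝ} (hε0 : 0 < ε) (hε1 : ε < 1) :
    ∃ A n₂ : ℕ, 0 < A ∧ 1 ≤ n₂ ∧ ∀ n, n₂ ≤ n →
      ε ^ (2*(A*(Nat.sqrt n+1))+1) ≤ entropyNum n (Kset ε) := by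
  obtain ⟨A₀, hA₀⟩ := ((tendsto_pow_atTop_nhds_zero_of_lt_one hε0.le hε1).eventually
    (gt_mem_nhds (by norm_num : (0:ℝ) < 1/8))).exists
  set A := A₀ + 1 with hA
  have hA0 : 0 < A := by omega
  have hA8 : ε ^ A < 1/8 := by
    have : ε ^ A ≤ ε ^ A₀ := pow_le_pow_of_le_one hε0.le hε1.le (by omega)
    linarith
  refine ⟨A, (2*A)*(2*A), hA0, by nlinarith, fun n hn => ?_⟩
  set s := Nat.sqrt n with hs
  set m := A*(s+1) with hm
  have hs2A : 2*A ≤ s := Nat.le_sqrt.2 hn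
  have hs1 : 1 ≤ s := by omega
  have hmn : m ≤ n := by
    calc m = A*(s+1) := hm
      _ ≤ A*(2*s) := Nat.mul_le_mul_left A (by omega)
      _ ≤ s*s := by nlinarith
      _ ≤ n := Nat.sqrt_le n
  have hn1 : 1 ≤ n := by nlinarith
  have hAAn : A*A*n ≤ m*m := by
    calc A*A*n ≤ A*A*((s+1)*(s+1)) :=
          Nat.mul_le_mul_left _ (le_of_lt (Nat.lt_succ_sqrt n))
      _ = (A*(s+1))*(A*(s+1)) := by ring
  have hcond : (2:ℝ)^(n-1) * (2 * ε^(m+1))^m < 1 := by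
    have hε8 : (0:ℝ) ≤ ε ^ A := by positivity
    calc (2:ℝ)^(n-1) * (2 * ε^(m+1))^m = (2:ℝ)^(n-1) * ((2:ℝ)^m * ε^((m+1)*m)) := by
          rw [mul_pow, ← pow_mul]
      _ ≤ (2:ℝ)^n * ((2:ℝ)^n * ε^(A*A*n)) := by
          have e1 : (2:ℝ)^(n-1) ≤ (2:ℝ)^n := pow_le_pow_right₀ one_le_two (by omega)
          have e2 : (2:ℝ)^m ≤ (2:ℝ)^n := pow_le_pow_right₀ one_le_two hmn
          have e3 : ε^((m+1)*m) ≤ ε^(A*A*n) := by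
            refine pow_le_pow_of_le_one hε0.le hε1.le ?_
            calc A*A*n ≤ m*m := hAAn
              _ ≤ (m+1)*m := by nlinarith
          have h2 : (0:ℝ) ≤ ε^((m+1)*m) := by positivity
          exact mul_le_mul e1 (mul_le_mul e2 e3 h2 (by positivity)) (by positivity)
            (by positivity)
      _ = (2:ℝ)^n * ((2:ℝ)^n * ((ε^A)^(A*n))) := by rw [show A*A*n = A*(A*n) by ring, pow_mul]
      _ ≤ (2:ℝ)^n * ((2:ℝ)^n * ((1/8:ℝ)^(A*n))) := by
          have h := pow_le_pow_left₀ hε8 hA8.le (A*n)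
          have h3 : (0:ℝ) ≤ (2:ℝ)^n := by positivity
          exact mul_le_mul_of_nonneg_left (mul_le_mul_of_nonneg_left h h3) h3
      _ ≤ (2:ℝ)^n * ((2:ℝ)^n * ((1/8:ℝ)^n)) := by
          have h : ((1/8:ℝ))^(A*n) ≤ (1/8:ℝ)^n :=
            pow_le_pow_of_le_one (by norm_num) (by norm_num) (Nat.le_mul_of_pos_left n hA0)
          have h3 : (0:ℝ) ≤ (2:ℝ)^n := by positivity
          exact mul_le_mul_of_nonneg_left (mul_le_mul_of_nonneg_left h h3) h3
      _ = ((1/2:ℝ))^n := by rw [← mul_assoc, ← mul_pow, ← mul_pow]; norm_num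
      _ < 1 := pow_lt_one₀ (by norm_num) (by norm_num) (by omega)
  have := pack hε0 hε1 hcond
  calc ε ^ (2*(A*(Nat.sqrt n+1))+1) = ε^(2*m+1) := by rw [hm, hs]
    _ ≤ entropyNum n (Kset ε) := this

lemma nat_sqrt_tendsto : Tendsto (fun n : ℕ => Nat.sqrt n) atTop atTop :=
  tendsto_atTop_atTop.2 (fun b => ⟨b*b, fun n hn => Nat.le_sqrt.2 hn⟩)

lemma tendsto_u (A : ℕ) :
    Tendsto (fun n : ℕ => ((2*(A*(Nat.sqrt n+1))+1 : ℕ):ℝ) * (1/(n:ℝ))) atTop (𝓝 0) := by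
  have hg : Tendsto (fun n : ℕ => ((4*A+1 : ℕ):ℝ) / (Nat.sqrt n : ℝ)) atTop (𝓝 0) :=
    Tendsto.div_atTop tendsto_const_nhds
      (tendsto_natCast_atTop_atTop.comp nat_sqrt_tendsto)
  refine squeeze_zero' ?_ ?_ hg
  · filter_upwards [eventually_ge_atTop 1] with n hn
    positivity
  · filter_upwards [eventually_ge_atTop 1] with n hn
    set s := Nat.sqrt n with hs
    have hs1 : 1 ≤ s := Nat.sqrt_pos.2 hn
    have hss : s * s ≤ n := Nat.sqrt_le n
    have hnum : (2*(A*(s+1))+1 : ℕ) ≤ (4*A+1) * s := by nlinarith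
    have hn0 : (0:ℝ) < (n:ℝ) := by exact_mod_cast hn
    have hs0 : (0:ℝ) < (s:ℝ) := by exact_mod_cast hs1
    rw [mul_one_div]
    have hnumR : ((2*(A*(s+1))+1 : ℕ):ℝ) ≤ (((4*A+1)*s : ℕ):ℝ) := by exact_mod_cast hnum
    have hssR : (s:ℝ)*(s:ℝ) ≤ (n:ℝ) := by exact_mod_cast hss
    calc ((2*(A*(s+1))+1 : ℕ):ℝ) / (n:ℝ) ≤ (((4*A+1)*s : ℕ):ℝ) / (n:ℝ) := by gcongr
      _ ≤ (((4*A+1)*s : ℕ):ℝ) / ((s:ℝ)*(s:ℝ)) := by gcongr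
      _ = ((4*A+1 : ℕ):ℝ) / (s:ℝ) := by push_cast; field_simp

lemma limsup_entropy {ε : ℝ} (hε0 : 0 < ε) (hε1 : ε < 1) :
    Filter.limsup (fun n : ℕ => entropyNum n (Kset ε) ^ ((1 : ℝ)/n)) atTop = 1 := by
  obtain ⟨A, n₂, hA0, hn₂, hlow⟩ := entropy_lower_tail hε0 hε1
  have htend : Tendsto (fun n : ℕ => entropyNum n (Kset ε) ^ ((1:ℝ)/n)) atTop (𝓝 1) := by
    have hgt : Tendsto (fun n : ℕ =>
        ε ^ (((2*(A*(Nat.sqrt n+1))+1 : ℕ):ℝ) * (1/(n:ℝ)))) atTop (𝓝 1) := by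
      have hc : ContinuousAt (fun t : ℝ => ε ^ t) 0 := Real.continuousAt_const_rpow hε0.ne'
      have h := hc.tendsto.comp (tendsto_u A)
      rw [Real.rpow_zero] at h
      exact h
    refine tendsto_of_tendsto_of_tendsto_of_le_of_le' hgt tendsto_const_nhds ?_ ?_
    · filter_upwards [eventually_ge_atTop n₂] with n hn
      have h := hlow n hn
      have hrw : ε ^ (((2*(A*(Nat.sqrt n+1))+1 : ℕ):ℝ) * (1/(n:ℝ)))
          = (ε ^ (2*(A*(Nat.sqrt n+1))+1 : ℕ)) ^ ((1:ℝ)/(n:ℝ)) := by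
        rw [Real.rpow_mul hε0.le, Real.rpow_natCast]
      rw [hrw]
      exact Real.rpow_le_rpow (by positivity) h (by positivity)
    · refine Eventually.of_forall (fun n => ?_)
      exact Real.rpow_le_one (entropy_nonneg _ _) (entropy_le_one hε0 hε1 n) (by positivity)
  exact htend.limsup_eq

end Stmt7Aux

open ZeroAtInfty in
/-- The set `K = {x ∈ c₀ : |xₙ| ≤ εⁿ}` is connected and compact, with
`(eₙ(K))ₙ ∈ ℓ₁` and `limsup eₙ(K)^(1/n) = 1`. -/
theorem stmt7 (ε : ℝ) (hε0 : 0 < ε) (hε1 : ε < 1)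
    (K : Set C₀(ℕ, ℂ)) (hK : K = {x : C₀(ℕ, ℂ) | ∀ n : ℕ, ‖x n‖ ≤ ε ^ (n + 1)}) :
    IsConnected K ∧ IsCompact K ∧ Summable (fun n : ℕ => entropyNum n K) ∧
    Filter.limsup (fun n : ℕ => entropyNum n K ^ ((1 : ℝ) / n)) atTop = 1 := by
  have hK' : K = Stmt7Aux.Kset ε := hK
  subst hK'
  exact ⟨Stmt7Aux.Kset_connected hε0, Stmt7Aux.Kset_compact hε0 hε1,
    Stmt7Aux.summable_entropy hε0 hε1, Stmt7Aux.limsup_entropy hε0 hε1⟩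
end

section
/- For every r ≥ 0, the holomorphic function f: B_{c_0} → c_0 with j-th coordinate f((x_n))_j = x_j^N for j ∈ σ_N (where σ_N is the N-th consecutive block of ℕ of length N!) satisfies that the sequence (e_n(f(2^{-r}B_{c_0})))_n does not belong to ℓ_p for any 1 ≤ p < ∞, while for each m, the m-homogeneous Taylor polynomial P_m f(0) has finite rank. -/
open Filter Metric Set Topology

/-- `blockStart N = 1! + 2! + ⋯ + N!`, the number of indices in the first `N` blocks. -/
def blockStart : ℕ → ℕ
  | 0 => 0
  | N + 1 => blockStart N + Nat.factorial (N + 1)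

/-- The index `N ≥ 1` of the block `σ_N` containing coordinate `j` (coordinates indexed
from `0`, so coordinate `j` is the `(j+1)`-st coordinate of the paper; `σ_N` consists of
the `N!` consecutive coordinates `blockStart (N-1), …, blockStart N - 1`). -/
noncomputable def blockOf (j : ℕ) : ℕ := sInf {N : ℕ | j < blockStart N}

open ZeroAtInfty

/-- indicator C₀ function -/
noncomputable def indC (A : Finset ℕ) (t : ℂ) : C₀(ℕ, ℂ) :=
  { toFun := fun j => if j ∈ A then t else 0
    continuous_toFun := continuous_of_discreteTopology
    zero_at_infty' := by
      rw [Filter.cocompact_eq_cofinite]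
      have h : ∀ᶠ j in Filter.cofinite, (fun j => if j ∈ A then t else 0) j = 0 :=
        A.eventually_cofinite_notMem.mono fun j hj => by simp [hj]
      exact Filter.Tendsto.congr' (h.mono fun j hj => hj.symm) tendsto_const_nhds }

lemma indC_apply (A : Finset ℕ) (t : ℂ) (j : ℕ) :
    indC A t j = if j ∈ A then t else 0 := rfl

lemma norm_C0_le {x : C₀(ℕ, ℂ)} {C : ℝ} (hC : 0 ≤ C) (h : ∀ j, ‖x j‖ ≤ C) : ‖x‖ ≤ C := by
  rw [← ZeroAtInftyContinuousMap.norm_toBCF_eq_norm]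
  exact BoundedContinuousFunction.norm_le hC |>.2 h

lemma norm_apply_le (x : C₀(ℕ, ℂ)) (j : ℕ) : ‖x j‖ ≤ ‖x‖ := by
  rw [← ZeroAtInftyContinuousMap.norm_toBCF_eq_norm]
  exact BoundedContinuousFunction.norm_coe_le_norm x.toBCF j

lemma indC_norm_le (A : Finset ℕ) (t : ℂ) : ‖indC A t‖ ≤ ‖t‖ := by
  refine norm_C0_le (norm_nonneg t) fun j => ?_
  rw [indC_apply]
  split <;> simp

lemma blockStart_strictMono : StrictMono blockStart := by
  apply strictMono_nat_of_lt_succ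
  intro n
  have := Nat.factorial_pos (n + 1)
  simp [blockStart]; omega

lemma self_le_blockStart (N : ℕ) : N ≤ blockStart N := by
  induction N with
  | zero => simp [blockStart]
  | succ n ih =>
    have := Nat.factorial_pos (n + 1)
    simp only [blockStart]; omega

lemma blockOf_eq {M j : ℕ} (h1 : blockStart M ≤ j) (h2 : j < blockStart (M + 1)) :
    blockOf j = M + 1 := by
  have hmem : M + 1 ∈ {N : ℕ | j < blockStart N} := h2
  refine le_antisymm (Nat.sInf_le hmem) (le_csInf ⟨_, hmem⟩ ?_)
  intro k hk
  by_contra hlt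
  push_neg at hlt
  have : blockStart k ≤ blockStart M := blockStart_strictMono.monotone (by omega)
  exact absurd hk (by simp only [Set.mem_setOf_eq]; omega)

lemma lt_blockStart_blockOf (j : ℕ) : j < blockStart (blockOf j) :=
  Nat.sInf_mem (⟨j + 1, lt_of_lt_of_le (Nat.lt_succ_self j) (self_le_blockStart (j + 1))⟩ :
    {N : ℕ | j < blockStart N}.Nonempty)

lemma blockOf_pos (j : ℕ) : 1 ≤ blockOf j := by
  by_contra h
  have h0 : blockOf j = 0 := by omega
  have := lt_blockStart_blockOf j
  rw [h0] at this
  simp [blockStart] at this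

section main

variable (r : ℕ) (f : C₀(ℕ, ℂ) → C₀(ℕ, ℂ))
  (hf : ∀ x : C₀(ℕ, ℂ), ‖x‖ < 1 → ∀ j : ℕ, f x j = (x j) ^ blockOf j)

include hf

/-- Key entropy number lower bound. -/
lemma entropy_lb (N n : ℕ) (hN : 1 ≤ N) (hn : n ≤ N.factorial) :
    ((2 : ℝ) ^ (-((r : ℝ) + 1))) ^ N / 2 ≤
      entropyNum n (f '' Metric.ball (0 : C₀(ℕ, ℂ)) ((2 : ℝ) ^ (-(r : ℝ)))) := by
  classical
  set tR : ℝ := (2 : ℝ) ^ (-((r : ℝ) + 1)) with htR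
  have htRpos : 0 < tR := Real.rpow_pos_of_pos two_pos _
  have htRlt : tR < (2 : ℝ) ^ (-(r : ℝ)) := by
    apply Real.rpow_lt_rpow_left_iff (x := (2:ℝ)) one_lt_two |>.2
    linarith
  have hrad1 : (2 : ℝ) ^ (-(r : ℝ)) ≤ 1 := by
    apply Real.rpow_le_one_of_one_le_of_nonpos one_le_two
    simp
  have htR1 : tR < 1 := lt_of_lt_of_le htRlt hrad1
  -- membership facts
  set L := f '' Metric.ball (0 : C₀(ℕ, ℂ)) ((2 : ℝ) ^ (-(r : ℝ))) with hL
  have hnorm_f : ∀ x : C₀(ℕ, ℂ), ‖x‖ < 1 → ‖f x‖ ≤ 1 := by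
    intro x hx
    refine norm_C0_le one_pos.le fun j => ?_
    rw [hf x hx j, norm_pow]
    exact pow_le_one₀ (norm_nonneg _) ((norm_apply_le x j).trans hx.le)
  -- nonemptiness of the defining set
  have hne : {ε : ℝ | 0 < ε ∧ ∃ s : Finset (C₀(ℕ, ℂ)), s.card ≤ 2 ^ (n - 1) ∧
      L ⊆ ⋃ x ∈ s, Metric.ball x ε}.Nonempty := by
    refine ⟨2, two_pos, {0}, by simpa using Nat.one_le_two_pow, ?_⟩
    rintro _ ⟨x, hx, rfl⟩
    simp only [Finset.mem_singleton, Set.iUnion_iUnion_eq_left, mem_ball, dist_zero_right]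
    have hx1 : ‖x‖ < 1 := by
      rw [mem_ball, dist_zero_right] at hx
      exact lt_of_lt_of_le hx hrad1
    exact lt_of_le_of_lt (hnorm_f x hx1) one_lt_two
  refine le_csInf hne ?_
  rintro ε ⟨hε, s, hcard, hcov⟩
  by_contra hlt
  push_neg at hlt
  obtain ⟨M, rfl⟩ : ∃ M, N = M + 1 := ⟨N - 1, (Nat.succ_pred_eq_of_pos hN).symm⟩
  set B : Finset ℕ := Finset.Ico (blockStart M) (blockStart (M + 1)) with hB
  have hBcard : B.card = (M + 1).factorial := by
    rw [hB, Nat.card_Ico]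
    simp [blockStart]
  set tC : ℂ := (tR : ℂ) with htC
  have htCnorm : ‖tC‖ = tR := by
    rw [htC, Complex.norm_real, Real.norm_of_nonneg htRpos.le]
  -- the points
  set y : Finset ℕ → C₀(ℕ, ℂ) := fun A => f (indC A tC) with hy
  have hxnorm : ∀ A : Finset ℕ, ‖indC A tC‖ ≤ tR := fun A => by
    simpa [htCnorm] using indC_norm_le A tC
  have hxlt1 : ∀ A : Finset ℕ, ‖indC A tC‖ < 1 := fun A => lt_of_le_of_lt (hxnorm A) htR1
  have hyL : ∀ A : Finset ℕ, y A ∈ L := by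
    intro A
    exact ⟨indC A tC, by
      rw [mem_ball, dist_zero_right]; exact lt_of_le_of_lt (hxnorm A) htRlt, rfl⟩
  -- choose covering centers
  have hc : ∀ A ∈ B.powerset, ∃ c ∈ s, y A ∈ Metric.ball c ε := by
    intro A _
    have := hcov (hyL A)
    simpa using this
  -- pigeonhole
  have hslt : s.card < B.powerset.card := by
    rw [Finset.card_powerset, hBcard]
    calc s.card ≤ 2 ^ (n - 1) := hcard
      _ < 2 ^ (M + 1).factorial := by
          apply Nat.pow_lt_pow_right one_lt_two
          have := Nat.factorial_pos (M + 1)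
          omega
  choose! F hFs hFb using hc
  obtain ⟨A, hA, A', hA', hne', heq⟩ :=
    Finset.exists_ne_map_eq_of_card_lt_of_maps_to hslt hFs
  -- a coordinate where they differ
  have hdiff : ∃ j ∈ B, ((j ∈ A ∧ j ∉ A') ∨ (j ∈ A' ∧ j ∉ A)) := by
    by_contra h
    push_neg at h
    apply hne'
    ext j
    by_cases hjB : j ∈ B
    · have hh := h j hjB
      tauto
    · constructor
      · intro hj; exact absurd (Finset.mem_powerset.1 hA hj) hjB
      · intro hj; exact absurd (Finset.mem_powerset.1 hA' hj) hjB
  obtain ⟨j, hjB, hj⟩ := hdiff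
  have hjblock : blockOf j = M + 1 := by
    rw [hB, Finset.mem_Ico] at hjB
    exact blockOf_eq hjB.1 hjB.2
  -- coordinate values
  have hval : ∀ A₀ : Finset ℕ, y A₀ j = if j ∈ A₀ then tC ^ (M + 1) else 0 := by
    intro A₀
    rw [hy]
    rw [hf (indC A₀ tC) (hxlt1 A₀) j, hjblock, indC_apply]
    split <;> simp [zero_pow]
  -- distance lower bound
  have hdistlb : tR ^ (M + 1) ≤ dist (y A) (y A') := by
    have h1 : ‖(y A - y A') j‖ ≤ ‖y A - y A'‖ := norm_apply_le _ j
    have h2 : (y A - y A') j = y A j - y A' j := rfl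
    rw [dist_eq_norm]
    refine le_trans ?_ h1
    rw [h2, hval A, hval A']
    rcases hj with ⟨h3, h4⟩ | ⟨h3, h4⟩ <;>
      simp only [h3, h4, if_true, if_false, sub_zero, zero_sub, norm_neg, norm_pow, htCnorm,
        le_refl]
  -- distance upper bound via the common ball
  have hdub : dist (y A) (y A') < 2 * ε := by
    have h1 := hFb A hA
    have h2 := hFb A' hA'
    rw [heq] at h1
    rw [mem_ball] at h1 h2
    calc dist (y A) (y A') ≤ dist (y A) (F A') + dist (y A') (F A') := dist_triangle_right _ _ _
      _ < ε + ε := add_lt_add h1 h2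
      _ = 2 * ε := by ring
  have : tR ^ (M + 1) < 2 * ε := lt_of_le_of_lt hdistlb hdub
  linarith
end main

lemma C0_sum_apply {ι : Type*} (s : Finset ι) (F : ι → C₀(ℕ, ℂ)) (k : ℕ) :
    (∑ i ∈ s, F i) k = ∑ i ∈ s, F i k := by
  classical
  induction s using Finset.induction_on with
  | empty => simp
  | insert _ _ h ih => simp [Finset.sum_insert h, ih]


open ZeroAtInfty in
/-- For the holomorphic `f : B_{c₀} → c₀` whose `j`-th coordinate is `xⱼ^N` for
`j ∈ σ_N`, the sequence of entropy numbers of `f(2⁻ʳ B_{c₀})` is not in `ℓ_p` for any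
`1 ≤ p < ∞`, while each `m`-homogeneous Taylor polynomial of `f` at `0` has finite rank. -/
theorem stmt16 (r : ℕ) (f : C₀(ℕ, ℂ) → C₀(ℕ, ℂ))
    (hf : ∀ x : C₀(ℕ, ℂ), ‖x‖ < 1 → ∀ j : ℕ, f x j = (x j) ^ blockOf j) :
    (∀ p : ℝ, 1 ≤ p →
      ¬ Summable (fun n : ℕ =>
        entropyNum n (f '' Metric.ball (0 : C₀(ℕ, ℂ)) ((2 : ℝ) ^ (-(r : ℝ)))) ^ p)) ∧
    (∀ m : ℕ, 1 ≤ m → ∀ g : C₀(ℕ, ℂ) → C₀(ℕ, ℂ),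
      (∀ x : C₀(ℕ, ℂ), ∀ j : ℕ, g x j = if blockOf j = m then (x j) ^ m else 0) →
      FiniteDimensional ℂ (Submodule.span ℂ (Set.range g))) := by
  constructor
  · intro p hp hsum
    set L := f '' Metric.ball (0 : C₀(ℕ, ℂ)) ((2 : ℝ) ^ (-(r : ℝ))) with hL
    set h : ℕ → ℝ := fun n => entropyNum n L ^ p with hh
    have hnn : ∀ n, 0 ≤ entropyNum n L := fun n => Real.sInf_nonneg (fun ε hε => hε.1.le)
    have hhnn : ∀ n, 0 ≤ h n := fun n => Real.rpow_nonneg (hnn n) p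
    set S := ∑' n, h n with hS
    have hS0 : 0 ≤ S := tsum_nonneg hhnn
    set tR : ℝ := (2 : ℝ) ^ (-((r : ℝ) + 1)) with htR
    have htRpos : 0 < tR := Real.rpow_pos_of_pos two_pos _
    set c : ℝ := tR ^ p with hc
    have hcpos : 0 < c := Real.rpow_pos_of_pos htRpos p
    have h2p : 0 < (2 : ℝ) ^ p := Real.rpow_pos_of_pos two_pos p
    have key : ∀ N : ℕ, 1 ≤ N → (N.factorial : ℝ) * (c ^ N / (2 : ℝ) ^ p) ≤ S := by
      intro N hN
      have hterm : ∀ n ∈ Finset.range N.factorial, c ^ N / (2 : ℝ) ^ p ≤ h n := by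
        intro n hn
        have hlb := entropy_lb r f hf N n hN (le_of_lt (Finset.mem_range.1 hn))
        have hmono : (tR ^ N / 2) ^ p ≤ entropyNum n L ^ p :=
          Real.rpow_le_rpow (by positivity) hlb (by linarith)
        have heq : (tR ^ N / 2) ^ p = c ^ N / (2 : ℝ) ^ p := by
          rw [Real.div_rpow (by positivity) (by norm_num : (0:ℝ) ≤ 2)]
          congr 1
          rw [← Real.rpow_natCast tR N, ← Real.rpow_natCast c N,
            ← Real.rpow_mul htRpos.le, hc, ← Real.rpow_mul htRpos.le, mul_comm]
        rw [hh]
        rw [← heq]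
        exact hmono
      calc (N.factorial : ℝ) * (c ^ N / (2 : ℝ) ^ p)
          = (Finset.range N.factorial).card • (c ^ N / (2 : ℝ) ^ p) := by
            simp [nsmul_eq_mul]
        _ ≤ ∑ n ∈ Finset.range N.factorial, h n := Finset.card_nsmul_le_sum _ _ _ hterm
        _ ≤ S := Summable.sum_le_tsum _ (fun n _ => hhnn n) hsum
    -- contradiction via factorial growth
    set D : ℝ := c⁻¹ with hD
    set X : ℝ := (2 : ℝ) ^ p * (S + 1) with hX
    have hXpos : 0 < X := by positivity
    have htend := FloorSemiring.tendsto_pow_div_factorial_atTop (K := ℝ) D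
    have hev : ∀ᶠ N : ℕ in atTop, D ^ N / (N.factorial : ℝ) < X⁻¹ :=
      htend.eventually (gt_mem_nhds (by positivity))
    obtain ⟨N, hlt, hN1⟩ := (hev.and (eventually_ge_atTop 1)).exists
    have hfac : (0:ℝ) < (N.factorial : ℝ) := by exact_mod_cast N.factorial_pos
    have hcN : 0 < c ^ N := pow_pos hcpos N
    have h1 : D ^ N * c ^ N = 1 := by
      rw [hD, ← mul_pow, inv_mul_cancel₀ hcpos.ne', one_pow]
    have h2 : D ^ N < X⁻¹ * (N.factorial : ℝ) := by
      have := (div_lt_iff₀ hfac).1 hlt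
      linarith [this]
    have h3 : 1 < X⁻¹ * ((N.factorial : ℝ) * c ^ N) := by
      calc (1:ℝ) = D ^ N * c ^ N := h1.symm
        _ < (X⁻¹ * (N.factorial : ℝ)) * c ^ N := mul_lt_mul_of_pos_right h2 hcN
        _ = X⁻¹ * ((N.factorial : ℝ) * c ^ N) := by ring
    have h4 : X < (N.factorial : ℝ) * c ^ N := by
      have := mul_lt_mul_of_pos_left h3 hXpos
      rwa [mul_one, ← mul_assoc, mul_inv_cancel₀ hXpos.ne', one_mul] at this
    have h6 : (N.factorial : ℝ) * c ^ N ≤ S * (2 : ℝ) ^ p := by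
      calc (N.factorial : ℝ) * c ^ N
          = (N.factorial : ℝ) * (c ^ N / (2 : ℝ) ^ p) * (2 : ℝ) ^ p := by
            field_simp
        _ ≤ S * (2 : ℝ) ^ p := by
            apply mul_le_mul_of_nonneg_right _ h2p.le
            exact key N hN1
    have h7 : (2 : ℝ) ^ p * (S + 1) < (2 : ℝ) ^ p * S := by
      calc (2 : ℝ) ^ p * (S + 1) = X := rfl
        _ < (N.factorial : ℝ) * c ^ N := h4
        _ ≤ S * (2 : ℝ) ^ p := h6
        _ = (2 : ℝ) ^ p * S := by ring
    have := (mul_lt_mul_iff_right₀ h2p).1 h7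
    linarith
  · intro m hm g hg
    classical
    set B : Finset ℕ := (Finset.range (blockStart m)).filter (fun j => blockOf j = m) with hB
    have hmemB : ∀ k, k ∈ B ↔ blockOf k = m := by
      intro k
      rw [hB, Finset.mem_filter, Finset.mem_range]
      constructor
      · exact fun hk => hk.2
      · intro hk
        exact ⟨hk ▸ lt_blockStart_blockOf k, hk⟩
    have hrange : Set.range g ⊆
        ↑(Submodule.span ℂ ((fun j => indC {j} (1:ℂ)) '' (B : Set ℕ))) := by
      rintro _ ⟨x, rfl⟩
      have hgx : g x = ∑ j ∈ B, (x j) ^ m • indC {j} (1:ℂ) := by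
        ext k
        rw [C0_sum_apply, hg x k]
        have hterm : ∀ j ∈ B, ((x j) ^ m • indC {j} (1:ℂ)) k
            = if j = k then (x j) ^ m else 0 := by
          intro j _
          rw [ZeroAtInftyContinuousMap.smul_apply, indC_apply]
          simp [Finset.mem_singleton, eq_comm]
        rw [Finset.sum_congr rfl hterm, Finset.sum_ite_eq' B k (fun j => (x j) ^ m)]
        by_cases hk : blockOf k = m
        · rw [if_pos hk, if_pos ((hmemB k).2 hk)]
        · rw [if_neg hk, if_neg (fun hkB => hk ((hmemB k).1 hkB))]
      rw [SetLike.mem_coe, hgx]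
      exact Submodule.sum_mem _ fun j hj =>
        Submodule.smul_mem _ _ (Submodule.subset_span ⟨j, by simpa using hj, rfl⟩)
    have hfd : FiniteDimensional ℂ
        (Submodule.span ℂ ((fun j => indC {j} (1:ℂ)) '' (B : Set ℕ))) :=
      FiniteDimensional.span_of_finite ℂ (B.finite_toSet.image _)
    exact Submodule.finiteDimensional_of_le (Submodule.span_le.2 hrange)
end
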